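/- arXiv:2110.00311 — 4 statements merged into one kernel-verified Lean document; each statement's English description precedes it below -/
import Mathlib

section
/- Let q be a prime, (a_n) a multiplicative sequence with a_n = O(n^λ), and define F(s, 1/q) = ∑ a_n e(n/q) n^{-s}, L_f(s) = ∑ a_n n^{-s}, F_q(s) = ∑_{j≥0} a_{q^j} q^{-js}, and F(s,χ) = ∑ a_n χ(n) n^{-s}, all converging absolutely for Re(s) > 1 + λ. Then for Re(s) > 1 + λ: F(s, 1/q) = L_f(s) − (q/(q−1))·L_f(s)/F_q(s) + (1/(q−1))·∑_{χ mod q, χ≠χ₀} τ(χ̄)·F(s,χ), provided F_q(s) ≠ 0 (which holds for Re(s) sufficiently large by multiplicativity). -/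
open Complex Finset

/-- e(x) = exp(2πix) -/
noncomputable def eC (x : ℂ) : ℂ := Complex.exp (2 * Real.pi * Complex.I * x)

/-- Gauss sum of the conjugate character:
`τ(χ̄) = ∑_{b mod q} conj(χ(b)) e(b/q)`. -/
noncomputable def gaussSumConj (q : ℕ) [NeZero q] (χ : DirichletCharacter ℂ q) : ℂ :=
  ∑ b : ZMod q, (starRingEnd ℂ) (χ b) * eC ((b.val : ℂ) / q)

lemma eC_norm (x : ℝ) : ‖eC (x : ℂ)‖ = 1 := by
  rw [eC, Complex.norm_exp]
  norm_num [Complex.mul_re, Complex.mul_im]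

lemma eC_add (x y : ℂ) : eC (x + y) = eC x * eC y := by
  rw [eC, eC, eC, ← Complex.exp_add]; ring_nf

lemma eC_nat (k : ℕ) : eC (k : ℂ) = 1 := by
  rw [eC]
  simpa [mul_comm, mul_assoc, mul_left_comm] using Complex.exp_int_mul_two_pi_mul_I (k : ℤ)

lemma eC_mod (q : ℕ) (hq : 0 < q) (n : ℕ) :
    eC ((n : ℂ) / q) = eC (((n % q : ℕ) : ℂ) / q) := by
  have hq0 : (q : ℂ) ≠ 0 := Nat.cast_ne_zero.mpr hq.ne'
  have h2 : ((q * (n / q) + n % q : ℕ) : ℂ) = (n : ℂ) := by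
    exact_mod_cast congrArg (fun m : ℕ => (m : ℂ)) (Nat.div_add_mod n q)
  push_cast at h2
  have h : ((n / q : ℕ) : ℂ) + ((n % q : ℕ) : ℂ) / q = (n : ℂ) / q := by
    rw [eq_div_iff hq0, add_mul, div_mul_cancel₀ _ hq0]
    linear_combination h2
  rw [← h, eC_add, eC_nat, one_mul]

lemma eC_zmod_sum (q : ℕ) [NeZero q] (hq : q.Prime) :
    ∑ b : ZMod q, eC ((b.val : ℂ) / q) = 0 := by
  have hq0 : (q : ℂ) ≠ 0 := Nat.cast_ne_zero.mpr hq.ne_zero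
  set ζ : ℂ := Complex.exp (2 * Real.pi * Complex.I / q) with hζ
  have hpow : ∀ k : ℕ, eC ((k : ℂ) / q) = ζ ^ k := by
    intro k
    rw [eC, hζ, ← Complex.exp_nat_mul]
    ring_nf
  have hsum : ∑ b : ZMod q, eC ((b.val : ℂ) / q) = ∑ k ∈ Finset.range q, ζ ^ k := by
    rw [Finset.sum_nbij' (i := fun (b : ZMod q) => b.val) (j := fun k => (k : ZMod q))]
    · intro b _; exact Finset.mem_range.mpr (ZMod.val_lt b)
    · intro k _; exact Finset.mem_univ _
    · intro b _; simp [ZMod.natCast_val, ZMod.cast_id]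
    · intro k hk; exact ZMod.val_cast_of_lt (Finset.mem_range.mp hk)
    · intro b _; rw [hpow]
  rw [hsum]
  have hζq : ζ ^ q = 1 := by
    rw [hζ, ← Complex.exp_nat_mul]
    rw [show (q : ℂ) * (2 * Real.pi * Complex.I / q) = 2 * Real.pi * Complex.I by field_simp]
    exact Complex.exp_two_pi_mul_I
  have h2pi : (2 * (Real.pi : ℂ) * Complex.I) ≠ 0 := by
    simp [Real.pi_ne_zero, Complex.I_ne_zero]
  have hζ1 : ζ ≠ 1 := by
    rw [hζ, Ne, Complex.exp_eq_one_iff]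
    rintro ⟨n, hn⟩
    have hn' := congrArg (fun z : ℂ => z * q) hn
    simp only [div_mul_cancel₀ _ hq0] at hn'
    have h3 : (n : ℂ) * q = 1 := by
      refine mul_left_cancel₀ h2pi ?_
      rw [mul_one]
      linear_combination -hn'
    have h4 : (n * q : ℤ) = 1 := by exact_mod_cast h3
    have h5 : (q : ℤ) ∣ 1 := ⟨n, by linear_combination -h4⟩
    have h6 : q ∣ 1 := by exact_mod_cast h5
    have := Nat.dvd_one.mp h6
    exact hq.one_lt.ne' this
  calc ∑ k ∈ Finset.range q, ζ ^ k = (ζ ^ q - 1) / (ζ - 1) := geom_sum_eq hζ1 q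
  _ = 0 := by rw [hζq]; simp


lemma star_char (q : ℕ) [NeZero q] [Fact (q.Prime)] (χ : DirichletCharacter ℂ q) (b : ZMod q) :
    (starRingEnd ℂ) (χ b) = χ b⁻¹ := by
  rw [← MulChar.inv_apply' χ b]
  exact MulChar.star_apply' χ b

lemma gaussSumConj_one (q : ℕ) [NeZero q] (hq : q.Prime) :
    gaussSumConj q 1 = -1 := by
  haveI : Fact q.Prime := ⟨hq⟩
  have key : ∀ b : ZMod q, (starRingEnd ℂ) ((1 : DirichletCharacter ℂ q) b) * eC ((b.val : ℂ) / q)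
      = eC ((b.val : ℂ) / q) - (if b = 0 then 1 else 0) := by
    intro b
    by_cases hb : b = 0
    · subst hb
      rw [MulChar.map_nonunit _ (by simpa using not_isUnit_zero)]
      simp [eC]
    · have hu : IsUnit b := isUnit_iff_ne_zero.mpr hb
      rw [MulChar.one_apply hu]
      simp [hb]
  rw [gaussSumConj]
  simp_rw [key]
  rw [Finset.sum_sub_distrib, eC_zmod_sum q hq]
  simp

lemma char_orth (q : ℕ) [NeZero q] (hq : q.Prime) (n : ℕ) (hn : ¬ q ∣ n) :
    ∑ χ : DirichletCharacter ℂ q, gaussSumConj q χ * χ ((n : ℕ) : ZMod q)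
      = ((q : ℂ) - 1) * eC ((n : ℂ) / q) := by
  haveI : Fact q.Prime := ⟨hq⟩
  haveI : NeZero (Monoid.exponent (ZMod q)ˣ) :=
    ⟨Monoid.exponent_ne_zero_of_finite⟩
  haveI : NeZero ((Monoid.exponent (ZMod q)ˣ : ℂ)) :=
    ⟨Nat.cast_ne_zero.mpr Monoid.exponent_ne_zero_of_finite⟩
  have hu : IsUnit ((n : ℕ) : ZMod q) := by
    rw [isUnit_iff_ne_zero, Ne, ZMod.natCast_eq_zero_iff]
    exact hn
  simp_rw [gaussSumConj, Finset.sum_mul, star_char q]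
  rw [Finset.sum_comm]
  have inner : ∀ b : ZMod q,
      (∑ χ : DirichletCharacter ℂ q, χ b⁻¹ * eC ((b.val : ℂ) / q) * χ ((n:ℕ) : ZMod q))
      = eC ((b.val : ℂ) / q) * (if b = ((n:ℕ) : ZMod q) then (q.totient : ℂ) else 0) := by
    intro b
    by_cases hb : IsUnit b
    · rw [← DirichletCharacter.sum_char_inv_mul_char_eq ℂ hb ((n:ℕ) : ZMod q), Finset.mul_sum]
      congr 1; ext χ; ring
    · have hb0 : b = 0 := by
        by_contra h
        exact hb (isUnit_iff_ne_zero.mpr h)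
      subst hb0
      have h0 : ∀ χ : DirichletCharacter ℂ q, χ (0 : ZMod q) = 0 :=
        fun χ => χ.map_nonunit not_isUnit_zero
      rw [if_neg (fun h => hb (by rw [h]; exact hu))]
      simp [inv_zero, h0]
  simp_rw [inner, mul_ite, mul_zero]
  rw [Finset.sum_ite_eq' Finset.univ ((n:ℕ) : ZMod q)]
  simp only [Finset.mem_univ, if_true]
  rw [Nat.totient_prime hq]
  have hcast : ((q - 1 : ℕ) : ℂ) = (q : ℂ) - 1 := by
    have := hq.one_le
    push_cast [this]
    ring
  rw [hcast]
  rw [ZMod.val_natCast, ← eC_mod q hq.pos n]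
  ring


lemma natCast_mul_cpow (m n : ℕ) (r : ℂ) :
    ((m * n : ℕ) : ℂ) ^ r = ((m : ℕ) : ℂ) ^ r * ((n : ℕ) : ℂ) ^ r := by
  have h := Complex.mul_cpow_ofReal_nonneg (Nat.cast_nonneg (α := ℝ) m)
    (Nat.cast_nonneg (α := ℝ) n) r
  push_cast at h
  push_cast
  exact h

lemma natCast_pow_cpow (x j : ℕ) (r : ℂ) :
    ((x ^ j : ℕ) : ℂ) ^ r = (((x : ℕ) : ℂ) ^ r) ^ j := by
  induction j with
  | zero => simp
  | succ j ih => rw [pow_succ, natCast_mul_cpow, ih, pow_succ]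

lemma summable_norm_weighted (a : ℕ → ℂ) (C lam : ℝ)
    (hgrowth : ∀ n : ℕ, 1 ≤ n → ‖a n‖ ≤ C * (n : ℝ) ^ lam)
    (s : ℂ) (hs : 1 + lam < s.re) (hlam : 0 < lam) (hC : 0 < C) (w : ℕ → ℂ)
    (hw : ∀ n, ‖w n‖ ≤ 1) :
    Summable (fun n : ℕ => ‖a n * w n * ((n : ℕ) : ℂ) ^ (-s)‖) := by
  have hs0 : -s ≠ 0 := by
    intro h
    have : s = 0 := by simpa [neg_eq_zero] using h
    rw [this] at hs; simp at hs; linarith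
  refine Summable.of_nonneg_of_le (fun n => norm_nonneg _)
    (f := fun n : ℕ => C * (n : ℝ) ^ (lam - s.re)) (fun n => ?_) ?_
  · rcases Nat.eq_zero_or_pos n with rfl | hn
    · simp [Complex.zero_cpow hs0]
      positivity
    · have hn0 : (0 : ℝ) < (n : ℝ) := by exact_mod_cast hn
      have h1 : ‖((n : ℕ) : ℂ) ^ (-s)‖ = (n : ℝ) ^ (-s.re) := by
        rw [Complex.norm_natCast_cpow_of_pos hn, Complex.neg_re]
      calc ‖a n * w n * ((n : ℕ) : ℂ) ^ (-s)‖
          = ‖a n‖ * ‖w n‖ * ‖((n : ℕ) : ℂ) ^ (-s)‖ := by rw [norm_mul, norm_mul]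
        _ ≤ (C * (n : ℝ) ^ lam) * 1 * ((n : ℝ) ^ (-s.re)) := by
            rw [h1]
            refine mul_le_mul (mul_le_mul (hgrowth n hn) (hw n) (norm_nonneg _) ?_) le_rfl
              (by positivity) (by positivity)
            positivity
        _ = C * (n : ℝ) ^ (lam - s.re) := by
            rw [mul_one, mul_assoc, ← Real.rpow_add hn0, sub_eq_add_neg]
  · exact (Real.summable_nat_rpow.mpr (by linarith)).mul_left C

open Classical in
lemma tsum_subtype_ite (P : ℕ → Prop) (f : ℕ → ℂ) :
    (∑' m : {m : ℕ // P m}, f m.val) = ∑' n : ℕ, if P n then f n else 0 := by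
  have h1 : ∀ m : {m : ℕ // P m}, f m.val = if P m.val then f m.val else 0 :=
    fun m => (if_pos m.2).symm
  calc (∑' m : {m : ℕ // P m}, f m.val)
      = ∑' m : {m : ℕ // P m}, (fun n => if P n then f n else 0) m.val :=
        tsum_congr (f := fun m : {m : ℕ // P m} => f m.val)
          (g := fun m : {m : ℕ // P m} => (fun n => if P n then f n else 0) m.val) h1
    _ = ∑' n : ℕ, if P n then f n else 0 := by
        refine Function.Injective.tsum_eq (f := fun n : ℕ => if P n then f n else 0)
          Subtype.val_injective ?_
        intro n hn
        have hP : P n := by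
          by_contra h
          exact hn (if_neg h)
        exact ⟨⟨n, hP⟩, rfl⟩

lemma euler_factor (q : ℕ) (hq : q.Prime) (a : ℕ → ℂ)
    (hmul : ∀ m n : ℕ, Nat.Coprime m n → a (m * n) = a m * a n)
    (s : ℂ) (hnorm : Summable (fun n : ℕ => ‖a n * ((n : ℕ) : ℂ) ^ (-s)‖))
    (hs0 : -s ≠ 0) :
    (∑' n : ℕ, a n * ((n : ℕ) : ℂ) ^ (-s))
      = (∑' j : ℕ, a (q ^ j) * ((q ^ j : ℕ) : ℂ) ^ (-s))
        * (∑' m : {m : ℕ // ¬ q ∣ m}, a m.val * ((m.val : ℕ) : ℂ) ^ (-s)) := by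
  set f : ℕ → ℂ := fun n => a n * ((n : ℕ) : ℂ) ^ (-s) with hf
  have hinj1 : Function.Injective (fun j : ℕ => q ^ j) :=
    fun j k h => Nat.pow_right_injective hq.two_le h
  have h1 : Summable (fun j : ℕ => ‖f (q ^ j)‖) := hnorm.comp_injective hinj1
  have h2 : Summable (fun m : {m : ℕ // ¬ q ∣ m} => ‖f m.val‖) :=
    hnorm.comp_injective Subtype.val_injective
  rw [tsum_mul_tsum_of_summable_norm h1 h2]
  have hpt : ∀ z : ℕ × {m : ℕ // ¬ q ∣ m}, f (q ^ z.1) * f z.2.val = f (q ^ z.1 * z.2.val) := by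
    rintro ⟨j, m, hm⟩
    simp only [hf]
    rw [hmul _ _ (Nat.Coprime.pow_left j ((hq.coprime_iff_not_dvd).mpr hm)), natCast_mul_cpow]
    ring
  have hg : Function.Injective (fun z : ℕ × {m : ℕ // ¬ q ∣ m} => q ^ z.1 * z.2.val) := by
    rintro ⟨j, m, hm⟩ ⟨k, n, hn⟩ h
    simp only at h
    have hm0 : m ≠ 0 := fun h0 => hm (h0 ▸ dvd_zero q)
    have hn0 : n ≠ 0 := fun h0 => hn (h0 ▸ dvd_zero q)
    have key : ∀ (i : ℕ) (m : ℕ), m ≠ 0 → ¬ q ∣ m → (q ^ i * m).factorization q = i := by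
      intro i m hm0' hm'
      rw [Nat.factorization_mul (pow_ne_zero i hq.ne_zero) hm0']
      simp [hq.factorization_pow, Nat.factorization_eq_zero_of_not_dvd hm']
    have hjk : j = k := by
      have := key j m hm0 hm
      rw [h, key k n hn0 hn] at this
      exact this.symm
    subst hjk
    have hmn : m = n := Nat.eq_of_mul_eq_mul_left (Nat.pow_pos (n := j) hq.pos) h
    simp [hmn]
  have hsupp : Function.support f ⊆
      Set.range (fun z : ℕ × {m : ℕ // ¬ q ∣ m} => q ^ z.1 * z.2.val) := by
    intro n hn
    have hn0 : n ≠ 0 := by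
      rintro rfl
      apply hn
      simp [hf, Complex.zero_cpow hs0]
    refine ⟨⟨n.factorization q, ⟨n / q ^ n.factorization q, Nat.not_dvd_ordCompl hq hn0⟩⟩, ?_⟩
    simpa using Nat.ordProj_mul_ordCompl_eq_self n q
  rw [tsum_congr hpt, Function.Injective.tsum_eq hg hsupp]


/-- For `(a_n)` multiplicative with `|a_n| ≤ C n^λ` and `q` prime, with
`F(s,1/q) = ∑ a_n e(n/q) n^{-s}`, `L_f(s) = ∑ a_n n^{-s}`,
`F_q(s) = ∑_j a_{q^j} q^{-js}`, `F(s,χ) = ∑ a_n χ(n) n^{-s}`, for `Re(s) > 1+λ`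
(with `F_q(s) ≠ 0`):
`F(s,1/q) = L_f(s) − (q/(q−1))·L_f(s)/F_q(s) + (1/(q−1))·∑_{χ≠χ₀} τ(χ̄) F(s,χ)`. -/
theorem additive_twist_decomposition (q : ℕ) (hq : q.Prime) (a : ℕ → ℂ)
    (ha1 : a 1 = 1)
    (hmul : ∀ m n : ℕ, Nat.Coprime m n → a (m * n) = a m * a n)
    (C lam : ℝ) (hC : 0 < C) (hlam : 0 < lam)
    (hgrowth : ∀ n : ℕ, 1 ≤ n → ‖a n‖ ≤ C * (n : ℝ) ^ lam)
    (s : ℂ) (hs : 1 + lam < s.re)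
    (hFq : (∑' j : ℕ, a (q ^ j) * (q : ℂ) ^ (-(j : ℂ) * s)) ≠ 0) :
    haveI : NeZero q := ⟨hq.ne_zero⟩
    (∑' n : ℕ, a (n + 1) * eC (((n + 1 : ℕ) : ℂ) / q) * ((n + 1 : ℕ) : ℂ) ^ (-s)) =
      (∑' n : ℕ, a (n + 1) * ((n + 1 : ℕ) : ℂ) ^ (-s))
        - ((q : ℂ) / ((q : ℂ) - 1)) *
            (∑' n : ℕ, a (n + 1) * ((n + 1 : ℕ) : ℂ) ^ (-s)) /
            (∑' j : ℕ, a (q ^ j) * (q : ℂ) ^ (-(j : ℂ) * s))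
        + (1 / ((q : ℂ) - 1)) *
            ∑ χ ∈ Finset.univ.filter (fun χ : DirichletCharacter ℂ q => χ ≠ 1),
              gaussSumConj q χ *
                ∑' n : ℕ, a (n + 1) * χ ((n + 1 : ℕ) : ZMod q) *
                  ((n + 1 : ℕ) : ℂ) ^ (-s) := by
  haveI : NeZero q := ⟨hq.ne_zero⟩
  haveI : Fact q.Prime := ⟨hq⟩
  have hq0C : (q : ℂ) ≠ 0 := Nat.cast_ne_zero.mpr hq.ne_zero
  have hq1C : (q : ℂ) - 1 ≠ 0 := sub_ne_zero.mpr (by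
    intro h
    have : (q : ℂ) = ((1 : ℕ) : ℂ) := by simpa using h
    exact hq.one_lt.ne' (Nat.cast_injective this))
  have hs0 : -s ≠ 0 := by
    intro h
    rw [neg_eq_zero] at h
    rw [h] at hs; simp at hs; linarith
  have hwe : ∀ n : ℕ, ‖eC ((n : ℂ) / q)‖ = 1 := by
    intro n
    have h : ((n : ℂ) / q) = (((n / q : ℝ)) : ℂ) := by push_cast; ring
    rw [h, eC_norm]
  -- summability
  have hsum : ∀ w : ℕ → ℂ, (∀ n, ‖w n‖ ≤ 1) →
      Summable (fun n : ℕ => a n * w n * ((n : ℕ) : ℂ) ^ (-s)) :=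
    fun w hw => (summable_norm_weighted a C lam hgrowth s hs hlam hC w hw).of_norm
  have hsumF : Summable (fun n : ℕ => a n * ((n : ℕ) : ℂ) ^ (-s)) := by
    have := hsum (fun _ => 1) (by simp)
    simpa using this
  have hsumN : Summable (fun n : ℕ => ‖a n * ((n : ℕ) : ℂ) ^ (-s)‖) := by
    have := summable_norm_weighted a C lam hgrowth s hs hlam hC (fun _ => 1) (by simp)
    simpa using this
  have hsumE : Summable (fun n : ℕ => a n * eC ((n : ℂ) / q) * ((n : ℕ) : ℂ) ^ (-s)) :=
    hsum _ (fun n => (hwe n).le)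
  have hsumD : Summable (fun n : ℕ =>
      a n * (if q ∣ n then (1 : ℂ) else 0) * ((n : ℕ) : ℂ) ^ (-s)) :=
    hsum _ (fun n => by by_cases h : q ∣ n <;> simp [h])
  have hsumI : Summable (fun n : ℕ =>
      a n * (if q ∣ n then (0 : ℂ) else 1) * ((n : ℕ) : ℂ) ^ (-s)) :=
    hsum _ (fun n => by by_cases h : q ∣ n <;> simp [h])
  have hsumE2 : Summable (fun n : ℕ =>
      a n * (if q ∣ n then (0 : ℂ) else eC ((n : ℂ) / q)) * ((n : ℕ) : ℂ) ^ (-s)) :=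
    hsum _ (fun n => by
      by_cases h : q ∣ n
      · simp [h]
      · rw [if_neg h]; exact (hwe n).le)
  have hsumX : ∀ χ : DirichletCharacter ℂ q,
      Summable (fun n : ℕ => a n * χ ((n : ℕ) : ZMod q) * ((n : ℕ) : ℂ) ^ (-s)) :=
    fun χ => hsum _ (fun n => DirichletCharacter.norm_le_one χ _)
  -- shift
  have hshift : ∀ g : ℕ → ℂ, Summable g → g 0 = 0 →
      (∑' n : ℕ, g (n + 1)) = ∑' n : ℕ, g n := by
    intro g hg h0
    rw [Summable.tsum_eq_zero_add hg, h0, zero_add]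
  have e1 : (∑' n : ℕ, a (n + 1) * eC (((n + 1 : ℕ) : ℂ) / q) * ((n + 1 : ℕ) : ℂ) ^ (-s))
      = ∑' n : ℕ, a n * eC ((n : ℂ) / q) * ((n : ℕ) : ℂ) ^ (-s) :=
    hshift (fun n => a n * eC ((n : ℂ) / q) * ((n : ℕ) : ℂ) ^ (-s)) hsumE
      (by simp [Complex.zero_cpow hs0])
  have e2 : (∑' n : ℕ, a (n + 1) * ((n + 1 : ℕ) : ℂ) ^ (-s))
      = ∑' n : ℕ, a n * ((n : ℕ) : ℂ) ^ (-s) :=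
    hshift (fun n => a n * ((n : ℕ) : ℂ) ^ (-s)) hsumF (by simp [Complex.zero_cpow hs0])
  have e4 : ∀ χ : DirichletCharacter ℂ q,
      (∑' n : ℕ, a (n + 1) * χ ((n + 1 : ℕ) : ZMod q) * ((n + 1 : ℕ) : ℂ) ^ (-s))
      = ∑' n : ℕ, a n * χ ((n : ℕ) : ZMod q) * ((n : ℕ) : ℂ) ^ (-s) :=
    fun χ => hshift (fun n => a n * χ ((n : ℕ) : ZMod q) * ((n : ℕ) : ℂ) ^ (-s)) (hsumX χ)
      (by simp [Complex.zero_cpow hs0])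
  have eFq : (∑' j : ℕ, a (q ^ j) * (q : ℂ) ^ (-(j : ℂ) * s))
      = ∑' j : ℕ, a (q ^ j) * ((q ^ j : ℕ) : ℂ) ^ (-s) := by
    refine tsum_congr fun j => ?_
    rw [natCast_pow_cpow, show (-(j : ℂ) * s) = (j : ℂ) * (-s) by ring, Complex.cpow_nat_mul]
  rw [e1, e2, eFq]
  rw [eFq] at hFq
  simp only [e4]
  -- abbreviations
  set L : ℂ := ∑' n : ℕ, a n * ((n : ℕ) : ℂ) ^ (-s) with hL
  set Fq' : ℂ := ∑' j : ℕ, a (q ^ j) * ((q ^ j : ℕ) : ℂ) ^ (-s) with hFq'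
  set LcI : ℂ := ∑' n : ℕ, a n * (if q ∣ n then (0 : ℂ) else 1) * ((n : ℕ) : ℂ) ^ (-s) with hLcI
  -- Euler product
  have heuler : L = Fq' * LcI := by
    rw [hL, hFq', hLcI, euler_factor q hq a hmul s hsumN hs0]
    congr 1
    rw [tsum_subtype_ite (fun m => ¬ q ∣ m) (fun n => a n * ((n : ℕ) : ℂ) ^ (-s))]
    refine tsum_congr fun n => ?_
    by_cases h : q ∣ n <;> simp [h]
  have hLc_eq : LcI = L / Fq' := by
    rw [heuler, mul_div_cancel_left₀ _ hFq]
  -- pointwise decomposition of the twisted sum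
  have hptT : ∀ n : ℕ, a n * eC ((n : ℂ) / q) * ((n : ℕ) : ℂ) ^ (-s)
      = a n * (if q ∣ n then (1 : ℂ) else 0) * ((n : ℕ) : ℂ) ^ (-s)
        + a n * (if q ∣ n then (0 : ℂ) else eC ((n : ℂ) / q)) * ((n : ℕ) : ℂ) ^ (-s) := by
    intro n
    by_cases h : q ∣ n
    · obtain ⟨k, rfl⟩ := h
      have : (((q * k : ℕ) : ℂ) / q) = ((k : ℕ) : ℂ) := by
        push_cast; field_simp
      rw [this, eC_nat]
      simp [dvd_mul_right]
    · simp [h]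
  have hTsplit : (∑' n : ℕ, a n * eC ((n : ℂ) / q) * ((n : ℕ) : ℂ) ^ (-s))
      = (∑' n : ℕ, a n * (if q ∣ n then (1 : ℂ) else 0) * ((n : ℕ) : ℂ) ^ (-s))
        + ∑' n : ℕ, a n * (if q ∣ n then (0 : ℂ) else eC ((n : ℂ) / q)) * ((n : ℕ) : ℂ) ^ (-s) := by
    calc (∑' n : ℕ, a n * eC ((n : ℂ) / q) * ((n : ℕ) : ℂ) ^ (-s))
        = ∑' n : ℕ, (a n * (if q ∣ n then (1 : ℂ) else 0) * ((n : ℕ) : ℂ) ^ (-s)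
            + a n * (if q ∣ n then (0 : ℂ) else eC ((n : ℂ) / q)) * ((n : ℕ) : ℂ) ^ (-s)) :=
          tsum_congr hptT
      _ = _ := Summable.tsum_add hsumD hsumE2
  have hD : (∑' n : ℕ, a n * (if q ∣ n then (1 : ℂ) else 0) * ((n : ℕ) : ℂ) ^ (-s))
      = L - LcI := by
    rw [hL, hLcI, ← Summable.tsum_sub hsumF hsumI]
    refine tsum_congr fun n => ?_
    by_cases h : q ∣ n <;> simp [h]
  have hptE : ∀ n : ℕ, a n * (if q ∣ n then (0 : ℂ) else eC ((n : ℂ) / q)) * ((n : ℕ) : ℂ) ^ (-s)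
      = (1 / ((q : ℂ) - 1)) * ∑ χ : DirichletCharacter ℂ q,
          gaussSumConj q χ * (a n * χ ((n : ℕ) : ZMod q) * ((n : ℕ) : ℂ) ^ (-s)) := by
    intro n
    by_cases h : q ∣ n
    · have h0 : ((n : ℕ) : ZMod q) = 0 := (ZMod.natCast_eq_zero_iff n q).mpr h
      have hz : ∀ χ : DirichletCharacter ℂ q, χ ((n : ℕ) : ZMod q) = 0 := fun χ => by
        rw [h0]; exact χ.map_nonunit not_isUnit_zero
      simp [h, hz]
    · have horth := char_orth q hq n h
      rw [if_neg h]
      have hre : (∑ χ : DirichletCharacter ℂ q,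
            gaussSumConj q χ * (a n * χ ((n : ℕ) : ZMod q) * ((n : ℕ) : ℂ) ^ (-s)))
          = (∑ χ : DirichletCharacter ℂ q, gaussSumConj q χ * χ ((n : ℕ) : ZMod q))
            * (a n * ((n : ℕ) : ℂ) ^ (-s)) := by
        rw [Finset.sum_mul]
        exact Finset.sum_congr rfl fun χ _ => by ring
      rw [hre, horth]
      field_simp
  have hE : (∑' n : ℕ, a n * (if q ∣ n then (0 : ℂ) else eC ((n : ℂ) / q)) * ((n : ℕ) : ℂ) ^ (-s))
      = (1 / ((q : ℂ) - 1)) * ∑ χ : DirichletCharacter ℂ q,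
          gaussSumConj q χ * ∑' n : ℕ, a n * χ ((n : ℕ) : ZMod q) * ((n : ℕ) : ℂ) ^ (-s) := by
    calc (∑' n : ℕ, a n * (if q ∣ n then (0 : ℂ) else eC ((n : ℂ) / q)) * ((n : ℕ) : ℂ) ^ (-s))
        = ∑' n : ℕ, (1 / ((q : ℂ) - 1)) * ∑ χ : DirichletCharacter ℂ q,
            gaussSumConj q χ * (a n * χ ((n : ℕ) : ZMod q) * ((n : ℕ) : ℂ) ^ (-s)) :=
          tsum_congr hptE
      _ = (1 / ((q : ℂ) - 1)) * ∑' n : ℕ, ∑ χ : DirichletCharacter ℂ q,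
            gaussSumConj q χ * (a n * χ ((n : ℕ) : ZMod q) * ((n : ℕ) : ℂ) ^ (-s)) :=
          tsum_mul_left
      _ = (1 / ((q : ℂ) - 1)) * ∑ χ : DirichletCharacter ℂ q, ∑' n : ℕ,
            gaussSumConj q χ * (a n * χ ((n : ℕ) : ZMod q) * ((n : ℕ) : ℂ) ^ (-s)) := by
          rw [Summable.tsum_finsetSum (fun χ _ => (hsumX χ).mul_left _)]
      _ = (1 / ((q : ℂ) - 1)) * ∑ χ : DirichletCharacter ℂ q,
            gaussSumConj q χ * ∑' n : ℕ, a n * χ ((n : ℕ) : ZMod q) * ((n : ℕ) : ℂ) ^ (-s) := by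
          congr 1
          exact Finset.sum_congr rfl fun χ _ => tsum_mul_left
  have hF1 : (∑' n : ℕ, a n * (1 : DirichletCharacter ℂ q) ((n : ℕ) : ZMod q)
        * ((n : ℕ) : ℂ) ^ (-s)) = LcI := by
    rw [hLcI]
    refine tsum_congr fun n => ?_
    by_cases h : q ∣ n
    · have h0 : ((n : ℕ) : ZMod q) = 0 := (ZMod.natCast_eq_zero_iff n q).mpr h
      rw [h0, MulChar.map_nonunit _ not_isUnit_zero, if_pos h]
    · have hu : IsUnit ((n : ℕ) : ZMod q) := isUnit_iff_ne_zero.mpr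
        (fun h0 => h ((ZMod.natCast_eq_zero_iff n q).mp h0))
      rw [MulChar.one_apply hu, if_neg h]
  have hsplitχ : (∑ χ : DirichletCharacter ℂ q,
        gaussSumConj q χ * ∑' n : ℕ, a n * χ ((n : ℕ) : ZMod q) * ((n : ℕ) : ℂ) ^ (-s))
      = gaussSumConj q 1 * LcI
        + ∑ χ ∈ Finset.univ.filter (fun χ : DirichletCharacter ℂ q => χ ≠ 1),
            gaussSumConj q χ * ∑' n : ℕ, a n * χ ((n : ℕ) : ZMod q) * ((n : ℕ) : ℂ) ^ (-s) := by
    rw [Finset.filter_ne', ← Finset.sum_erase_add Finset.univ _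
      (Finset.mem_univ (1 : DirichletCharacter ℂ q)), hF1]
    ring
  rw [hTsplit, hD, hE, hsplitχ, gaussSumConj_one q hq, hLc_eq]
  field_simp
  ring
end

section
/- Let (a_n) be multiplicative with a_n = O(n^λ) and let q be a prime. If the Dirichlet series F_q(s) = ∑_{j≥0} a_{q^j} q^{-js} extends to a holomorphic, nonvanishing function on Re(s) ≥ 1/2, then the formal power series E_q(z) with E_q(q^{-s}) = 1/F_q(s) has radius of convergence at least q^{-1/2}. -/
open Complex

/-- Let `(a_n)` be multiplicative with `|a_n| ≤ C n^λ`, `q` prime. If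
`F_q(s) = ∑_j a_{q^j} q^{-js}` extends to a holomorphic nonvanishing function on
`Re(s) ≥ 1/2`, then the power series `E_q(z)` with `E_q(q^{-s}) = 1/F_q(s)`
(i.e. the formal inverse of `∑_j a_{q^j} z^j`) has radius of convergence at
least `q^{-1/2}`. -/
theorem euler_factor_inverse_radius (q : ℕ) (hq : q.Prime) (a : ℕ → ℂ)
    (ha1 : a 1 = 1)
    (hmul : ∀ m n : ℕ, Nat.Coprime m n → a (m * n) = a m * a n)
    (C lam : ℝ) (hC : 0 < C) (hlam : 0 < lam)
    (hgrowth : ∀ n : ℕ, 1 ≤ n → ‖a n‖ ≤ C * (n : ℝ) ^ lam)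
    (E : ℕ → ℂ)
    (hinv : ∀ n : ℕ, (∑ i ∈ Finset.range (n + 1), E i * a (q ^ (n - i))) =
      if n = 0 then 1 else 0)
    (G : ℂ → ℂ)
    (hGanalytic : ∀ s : ℂ, (1 : ℝ) / 2 ≤ s.re → AnalyticAt ℂ G s)
    (hGne : ∀ s : ℂ, (1 : ℝ) / 2 ≤ s.re → G s ≠ 0)
    (hGeq : ∀ s : ℂ, 1 + lam < s.re →
      G s = ∑' j : ℕ, a (q ^ j) * (q : ℂ) ^ (-(j : ℂ) * s)) :
    ∀ z : ℂ, ‖z‖ < (q : ℝ) ^ (-(1 : ℝ) / 2) →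
      Summable fun j : ℕ => ‖E j‖ * ‖z‖ ^ j := by
  intro z hz
  have hq1 : (1 : ℝ) < (q : ℝ) := by exact_mod_cast hq.one_lt
  have hq0 : (0 : ℝ) < (q : ℝ) := by linarith
  set L : ℝ := Real.log q with hLdef
  have hL : 0 < L := Real.log_pos hq1
  set Lc : ℂ := (L : ℂ) with hLcdef
  have hLc0 : Lc ≠ 0 := by
    simp only [hLcdef, ne_eq, Complex.ofReal_eq_zero]
    exact hL.ne'
  have hlogQ : Complex.log (q : ℂ) = Lc := (Complex.ofReal_log hq0.le).symm
  have hQ0 : (q : ℂ) ≠ 0 := by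
    simp only [ne_eq, Nat.cast_eq_zero]
    exact hq.pos.ne'
  have hcpow : ∀ w : ℂ, (q : ℂ) ^ w = Complex.exp (Lc * w) := fun w => by
    rw [Complex.cpow_def_of_ne_zero hQ0, hlogQ]
  -- basic logarithm estimate
  have hkey : ∀ (c : ℝ) (y : ℂ), y ≠ 0 → ‖y‖ < (q : ℝ) ^ (-c : ℝ) →
      c < -Real.log ‖y‖ / L := by
    intro c y hy0 hy
    have h1 : Real.log ‖y‖ < Real.log ((q : ℝ) ^ (-c : ℝ)) :=
      Real.log_lt_log (norm_pos_iff.mpr hy0) hy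
    rw [Real.log_rpow hq0] at h1
    rw [lt_div_iff₀ hL]
    nlinarith
  -- real part of the standard branch
  have hSre : ∀ y : ℂ, (-Complex.log y / Lc).re = -Real.log ‖y‖ / L := by
    intro y
    rw [hLcdef, Complex.div_ofReal_re, Complex.neg_re, Complex.log_re]
  have hexpS : ∀ y : ℂ, y ≠ 0 → Complex.exp (-(-Complex.log y / Lc) * Lc) = y := by
    intro y hy0
    have h1 : -(-Complex.log y / Lc) * Lc = Complex.log y := by
      field_simp
    rw [h1, Complex.exp_log hy0]
  -- bounds on the coefficients
  have hb : ∀ j : ℕ, ‖a (q ^ j)‖ ≤ C * ((q : ℝ) ^ lam) ^ j := by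
    intro j
    have h1 : 1 ≤ q ^ j := Nat.one_le_pow _ _ hq.pos
    have h2 := hgrowth (q ^ j) h1
    have h3 : ((q ^ j : ℕ) : ℝ) ^ lam = ((q : ℝ) ^ lam) ^ j := by
      push_cast
      rw [← Real.rpow_natCast ((q : ℝ) ^ lam) j, ← Real.rpow_natCast (q : ℝ) j,
        ← Real.rpow_mul hq0.le, ← Real.rpow_mul hq0.le, mul_comm]
    rwa [h3] at h2
  have hKpos : (0 : ℝ) < (q : ℝ) ^ lam := Real.rpow_pos_of_pos hq0 _
  have hbsum : ∀ y : ℂ, ‖y‖ < (q : ℝ) ^ (-lam : ℝ) →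
      Summable fun j : ℕ => ‖a (q ^ j) * y ^ j‖ := by
    intro y hy
    have hinvK : (q : ℝ) ^ (-lam : ℝ) = ((q : ℝ) ^ lam)⁻¹ := by
      rw [Real.rpow_neg hq0.le]
    have hlt : (q : ℝ) ^ lam * ‖y‖ < 1 := by
      rw [hinvK] at hy
      calc (q : ℝ) ^ lam * ‖y‖ < (q : ℝ) ^ lam * ((q : ℝ) ^ lam)⁻¹ := by
            exact mul_lt_mul_of_pos_left hy hKpos
        _ = 1 := mul_inv_cancel₀ hKpos.ne'
    refine Summable.of_nonneg_of_le (fun j => norm_nonneg _) (fun j => ?_)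
      ((summable_geometric_of_lt_one (by positivity) hlt).mul_left C)
    rw [norm_mul, norm_pow, mul_pow]
    calc ‖a (q ^ j)‖ * ‖y‖ ^ j ≤ C * ((q : ℝ) ^ lam) ^ j * ‖y‖ ^ j := by
          apply mul_le_mul_of_nonneg_right (hb j) (by positivity)
      _ = C * (((q : ℝ) ^ lam) ^ j * ‖y‖ ^ j) := by ring
  -- the Euler factor as a function
  set f : ℂ → ℂ := fun y => ∑' j : ℕ, a (q ^ j) * y ^ j with hfdef
  have hf0 : f 0 = 1 := by
    rw [hfdef]
    simp only
    rw [tsum_eq_single 0 (fun j hj => by simp [zero_pow hj])]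
    simp [ha1]
  have hfa : AnalyticAt ℂ f 0 := by
    set pf := FormalMultilinearSeries.ofScalars ℂ (fun j : ℕ => a (q ^ j)) with hpf
    have hsum : f = pf.sum := by
      funext y
      rw [hfdef, hpf, FormalMultilinearSeries.sum]
      exact tsum_congr fun n => by
        rw [FormalMultilinearSeries.ofScalars_apply_eq, smul_eq_mul]
    have hrad : 0 < pf.radius := by
      set t : ℝ := (q : ℝ) ^ (-lam : ℝ) / 2 with ht
      have htpos : 0 < t := by
        have := Real.rpow_pos_of_pos hq0 (-lam : ℝ)
        positivity
      have htlt : t < (q : ℝ) ^ (-lam : ℝ) := by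
        have := Real.rpow_pos_of_pos hq0 (-lam : ℝ)
        rw [ht]; linarith
      set r : NNReal := ⟨t, htpos.le⟩ with hr
      have h1 : Summable fun n : ℕ => ‖pf n‖ * (r : ℝ) ^ n := by
        have h2 := hbsum ((t : ℝ) : ℂ)
          (by rw [Complex.norm_real, Real.norm_eq_abs, abs_of_pos htpos]; exact htlt)
        refine h2.congr fun n => ?_
        rw [norm_mul, norm_pow, Complex.norm_real, Real.norm_eq_abs, abs_of_pos htpos,
          hpf, FormalMultilinearSeries.ofScalars_norm]
        rfl
      have := pf.le_radius_of_summable_norm h1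
      have hrpos : (0 : NNReal) < r := by exact_mod_cast htpos
      exact lt_of_lt_of_le (ENNReal.coe_pos.mpr hrpos) this
    have := (pf.hasFPowerSeriesOnBall hrad).analyticAt
    rwa [← hsum] at this
  -- nonvanishing of f near zero
  have hfne : ∃ ρ₁ > 0, ∀ y : ℂ, ‖y‖ < ρ₁ → f y ≠ 0 := by
    have h1 : ∀ᶠ y in nhds (0 : ℂ), f y ≠ 0 :=
      hfa.continuousAt.eventually_ne (by rw [hf0]; exact one_ne_zero)
    obtain ⟨ρ₁, hρ₁, hball⟩ := Metric.eventually_nhds_iff.mp h1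
    exact ⟨ρ₁, hρ₁, fun y hy => hball (by rwa [dist_zero_right])⟩
  obtain ⟨ρ₁, hρ₁pos, hρ₁⟩ := hfne
  -- periodicity of G
  set T : ℂ := ((2 * Real.pi / L : ℝ) : ℂ) * Complex.I with hTdef
  have hTre : T.re = 0 := by
    rw [hTdef, Complex.re_ofReal_mul, Complex.I_re, mul_zero]
  have hTL : T * Lc = 2 * (Real.pi : ℂ) * Complex.I := by
    rw [hTdef, hLcdef]
    have h1 : ((2 * Real.pi / L : ℝ) : ℂ) * (L : ℂ) = ((2 * Real.pi : ℝ) : ℂ) := by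
      rw [← Complex.ofReal_mul]
      congr 1
      field_simp
    calc ((2 * Real.pi / L : ℝ) : ℂ) * Complex.I * (L : ℂ)
        = ((2 * Real.pi / L : ℝ) : ℂ) * (L : ℂ) * Complex.I := by ring
      _ = ((2 * Real.pi : ℝ) : ℂ) * Complex.I := by rw [h1]
      _ = 2 * (Real.pi : ℂ) * Complex.I := by push_cast; ring
  have hre_add_T : ∀ s : ℂ, (s + T).re = s.re := by
    intro s; rw [Complex.add_re, hTre, add_zero]
  have hGT : ∀ s : ℂ, 1 / 2 < s.re → G (s + T) = G s := by
    have h1 : AnalyticOnNhd ℂ (fun s => G (s + T)) {s : ℂ | 1 / 2 < s.re} := by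
      intro x hx
      have hinner : AnalyticAt ℂ (fun s : ℂ => s + T) x := by
        exact analyticAt_id.add analyticAt_const
      have := AnalyticAt.comp (f := fun s : ℂ => s + T) (x := x)
        (hGanalytic (x + T) (by rw [hre_add_T]; exact le_of_lt hx)) hinner
      exact this
    have h2 : AnalyticOnNhd ℂ G {s : ℂ | 1 / 2 < s.re} :=
      fun x hx => hGanalytic x (le_of_lt hx)
    have hpre : IsPreconnected {s : ℂ | 1 / 2 < s.re} :=
      (convex_halfSpace_re_gt (1 / 2 : ℝ)).isPreconnected
    have hz₀ : ((2 + lam : ℝ) : ℂ) ∈ {s : ℂ | 1 / 2 < s.re} := by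
      simp only [Set.mem_setOf_eq, Complex.ofReal_re]
      linarith
    have hfg : (fun s => G (s + T)) =ᶠ[nhds ((2 + lam : ℝ) : ℂ)] G := by
      have hV : IsOpen {s : ℂ | 1 + lam < s.re} :=
        isOpen_lt continuous_const Complex.continuous_re
      have hz₀V : ((2 + lam : ℝ) : ℂ) ∈ {s : ℂ | 1 + lam < s.re} := by
        simp only [Set.mem_setOf_eq, Complex.ofReal_re]
        linarith
      filter_upwards [hV.mem_nhds hz₀V] with s hs
      rw [hGeq _ (by rw [hre_add_T]; exact hs), hGeq _ hs]
      refine tsum_congr fun j => ?_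
      congr 1
      rw [hcpow, hcpow]
      have h3 : Lc * (-(j : ℂ) * (s + T)) =
          Lc * (-(j : ℂ) * s) + ((-(j : ℤ) : ℤ) : ℂ) * (2 * (Real.pi : ℂ) * Complex.I) := by
        push_cast
        rw [← hTL]
        ring
      rw [h3, Complex.exp_add, Complex.exp_int_mul_two_pi_mul_I, mul_one]
    intro s hs
    exact h1.eqOn_of_preconnected_of_eventuallyEq h2 hpre hz₀ hfg hs
  have hre_int : ∀ (k : ℤ) (s : ℂ), (s + (k : ℂ) * T).re = s.re := by
    intro k s
    rw [Complex.add_re, Complex.mul_re, hTre, Complex.intCast_im]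
    ring
  have hGZ : ∀ (k : ℤ) (s : ℂ), 1 / 2 < s.re → G (s + (k : ℂ) * T) = G s := by
    intro k
    induction k using Int.induction_on with
    | zero => intro s hs; simp
    | succ k ih =>
      intro s hs
      have h2 : (((k : ℤ) + 1 : ℤ) : ℂ) = (((k : ℤ) : ℤ) : ℂ) + 1 := by push_cast; ring
      rw [h2]
      have h1 : s + ((((k : ℤ) : ℤ) : ℂ) + 1) * T = (s + (((k : ℤ) : ℤ) : ℂ) * T) + T := by
        ring
      rw [h1, hGT _ (by rw [hre_int (k : ℤ) s]; exact hs)]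
      exact ih s hs
    | pred k ih =>
      intro s hs
      have h2 : G ((s + ((-(k : ℤ) - 1 : ℤ) : ℂ) * T) + T)
          = G (s + ((-(k : ℤ) - 1 : ℤ) : ℂ) * T) :=
        hGT _ (by rw [hre_int (-(k : ℤ) - 1) s]; exact hs)
      have h1 : (s + ((-(k : ℤ) - 1 : ℤ) : ℂ) * T) + T = s + ((-(k : ℤ) : ℤ) : ℂ) * T := by
        push_cast
        ring
      rw [h1] at h2
      rw [← h2]
      exact ih s hs
  have hsame : ∀ s₁ s₂ : ℂ, 1 / 2 < s₁.re → 1 / 2 < s₂.re →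
      Complex.exp (-s₁ * Lc) = Complex.exp (-s₂ * Lc) → G s₁ = G s₂ := by
    intro s₁ s₂ h₁ h₂ hexp
    obtain ⟨n, hn⟩ := Complex.exp_eq_exp_iff_exists_int.mp hexp
    have h3 : s₁ = s₂ + ((-n : ℤ) : ℂ) * T := by
      apply mul_right_cancel₀ hLc0
      push_cast
      push_cast at hn
      linear_combination -hn + (n : ℂ) * hTL
    rw [h3]
    exact hGZ (-n) s₂ h₂
  -- the candidate inverse function
  set g : ℂ → ℂ := fun y => if y = 0 then 1 else (G (-Complex.log y / Lc))⁻¹ with hgdef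
  set rhalf : ℝ := (q : ℝ) ^ (-(1 : ℝ) / 2) with hrhalfdef
  have hrhalf_eq : rhalf = (q : ℝ) ^ (-(1 / 2 : ℝ) : ℝ) := by
    rw [hrhalfdef]; norm_num
  have hrhalfpos : 0 < rhalf := Real.rpow_pos_of_pos hq0 _
  set r3 : ℝ := (q : ℝ) ^ (-(2 + lam) : ℝ) with hr3def
  have hr3pos : 0 < r3 := Real.rpow_pos_of_pos hq0 _
  have hr3lam : r3 < (q : ℝ) ^ (-lam : ℝ) := by
    rw [hr3def]
    apply Real.rpow_lt_rpow_left_iff hq1 |>.mpr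
    linarith
  -- g agrees with f⁻¹ near 0
  have hgf : ∀ y : ℂ, ‖y‖ < r3 → g y = (f y)⁻¹ := by
    intro y hy
    by_cases hy0 : y = 0
    · subst hy0
      simp [hgdef, hf0]
    · rw [hgdef]
      simp only [if_neg hy0]
      congr 1
      have hre1 : 1 + lam < (-Complex.log y / Lc).re := by
        rw [hSre]
        have := hkey (2 + lam) y hy0 (by rwa [← hr3def])
        linarith
      rw [hGeq _ hre1, hfdef]
      refine tsum_congr fun j => ?_
      congr 1
      rw [hcpow]
      have h4 : Lc * (-(j : ℂ) * (-Complex.log y / Lc)) =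
          (j : ℂ) * (-(-Complex.log y / Lc) * Lc) := by ring
      rw [h4, Complex.exp_nat_mul, hexpS y hy0]
  -- differentiability of g on the ball of radius rhalf
  have hgd : ∀ y : ℂ, ‖y‖ < rhalf → DifferentiableAt ℂ g y := by
    intro y hy
    by_cases hy0 : y = 0
    · have heq : g =ᶠ[nhds (0 : ℂ)] fun w => (f w)⁻¹ := by
        filter_upwards [Metric.ball_mem_nhds (0 : ℂ) hr3pos] with w hw
        exact hgf w (mem_ball_zero_iff.mp hw)
      have hd : DifferentiableAt ℂ (fun w => (f w)⁻¹) 0 :=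
        (hfa.inv (by rw [hf0]; exact one_ne_zero)).differentiableAt
      rw [hy0]
      exact hd.congr_of_eventuallyEq heq
    · have hrey : (1 : ℝ) / 2 < (-Complex.log y / Lc).re := by
        rw [hSre]
        exact hkey (1 / 2) y hy0 (by rwa [← hrhalf_eq])
      by_cases hslit : y ∈ Complex.slitPlane
      · have hev : g =ᶠ[nhds y] fun w => (G (-Complex.log w / Lc))⁻¹ := by
          filter_upwards [(isOpen_compl_singleton (x := (0 : ℂ))).mem_nhds hy0] with w hw
          rw [hgdef]
          simp only [if_neg (Set.mem_compl_singleton_iff.mp hw)]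
        have hdS : DifferentiableAt ℂ (fun w => -Complex.log w / Lc) y :=
          ((Complex.differentiableAt_log hslit).neg).div_const _
        have hGd : DifferentiableAt ℂ G (-Complex.log y / Lc) :=
          (hGanalytic _ hrey.le).differentiableAt
        exact (DifferentiableAt.inv (hGd.comp y hdS : DifferentiableAt ℂ (fun w => G (-Complex.log w / Lc)) y) (hGne _ hrey.le)).congr_of_eventuallyEq hev
      · have hyre : y.re < 0 := by
          rw [Complex.mem_slitPlane_iff] at hslit
          push_neg at hslit
          rcases lt_or_eq_of_le hslit.1 with h | h
          · exact h
          · exact absurd (Complex.ext (by simp [h]) (by simp [hslit.2])) hy0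
        set W : Set ℂ := {w : ℂ | w.re < 0} ∩ Metric.ball (0 : ℂ) rhalf with hWdef
        have hWopen : IsOpen W :=
          (isOpen_lt Complex.continuous_re continuous_const).inter Metric.isOpen_ball
        have hyW : y ∈ W := ⟨hyre, mem_ball_zero_iff.mpr hy⟩
        have hs2re : ∀ w : ℂ, (-(Complex.log (-w) + (Real.pi : ℂ) * Complex.I) / Lc).re
            = -Real.log ‖w‖ / L := by
          intro w
          rw [hLcdef, Complex.div_ofReal_re, Complex.neg_re, Complex.add_re,
            Complex.re_ofReal_mul, Complex.I_re, mul_zero, add_zero, Complex.log_re]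
          rw [norm_neg]
        have hkeyW : ∀ w ∈ W, g w =
            (G (-(Complex.log (-w) + (Real.pi : ℂ) * Complex.I) / Lc))⁻¹ := by
          intro w hw
          have hw0 : w ≠ 0 := by
            intro h
            rw [h] at hw
            exact lt_irrefl 0 (by simpa using hw.1)
          have hwn : ‖w‖ < rhalf := mem_ball_zero_iff.mp hw.2
          rw [hgdef]
          simp only [if_neg hw0]
          congr 1
          apply hsame
          · rw [hSre]
            exact hkey (1 / 2) w hw0 (by rwa [← hrhalf_eq])
          · rw [hs2re]
            exact hkey (1 / 2) w hw0 (by rwa [← hrhalf_eq])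
          · rw [hexpS w hw0]
            have h5 : -(-(Complex.log (-w) + (Real.pi : ℂ) * Complex.I) / Lc) * Lc
                = Complex.log (-w) + (Real.pi : ℂ) * Complex.I := by
              field_simp
            rw [h5, Complex.exp_add, Complex.exp_log (neg_ne_zero.mpr hw0),
              Complex.exp_pi_mul_I]
            ring
        have hev : g =ᶠ[nhds y]
            fun w => (G (-(Complex.log (-w) + (Real.pi : ℂ) * Complex.I) / Lc))⁻¹ := by
          filter_upwards [hWopen.mem_nhds hyW] with w hw
          exact hkeyW w hw
        have hnyslit : -y ∈ Complex.slitPlane := by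
          rw [Complex.mem_slitPlane_iff]
          left
          rw [Complex.neg_re]
          linarith
        have hdlog : DifferentiableAt ℂ (fun w : ℂ => Complex.log (-w)) y :=
          (Complex.differentiableAt_log hnyslit).comp y (differentiable_neg.differentiableAt)
        have hdS2 : DifferentiableAt ℂ
            (fun w => -(Complex.log (-w) + (Real.pi : ℂ) * Complex.I) / Lc) y :=
          ((hdlog.add_const _).neg).div_const _
        have hre2 : (1 : ℝ) / 2 < (-(Complex.log (-y) + (Real.pi : ℂ) * Complex.I) / Lc).re := by
          rw [hs2re]
          exact hkey (1 / 2) y hy0 (by rwa [← hrhalf_eq])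
        have hGd : DifferentiableAt ℂ G
            (-(Complex.log (-y) + (Real.pi : ℂ) * Complex.I) / Lc) :=
          (hGanalytic _ hre2.le).differentiableAt
        exact (DifferentiableAt.inv (hGd.comp y hdS2 : DifferentiableAt ℂ (fun w => G (-(Complex.log (-w) + (Real.pi : ℂ) * Complex.I) / Lc)) y) (hGne _ hre2.le)).congr_of_eventuallyEq hev
  -- power series of g on a ball of radius slightly larger than ‖z‖
  set Rr : ℝ := (‖z‖ + rhalf) / 2 with hRrdef
  have hzR : ‖z‖ < Rr := by rw [hRrdef]; linarith
  have hRrh : Rr < rhalf := by rw [hRrdef]; linarith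
  have hRpos : 0 < Rr := lt_of_le_of_lt (norm_nonneg z) hzR
  set R : NNReal := ⟨Rr, hRpos.le⟩ with hRdef
  have hRcoe : (R : ℝ) = Rr := rfl
  have hdo : DifferentiableOn ℂ g (Metric.closedBall (0 : ℂ) R) := by
    intro y hy
    have hyn : ‖y‖ ≤ Rr := by
      rw [← hRcoe]
      exact mem_closedBall_zero_iff.mp hy
    exact (hgd y (lt_of_le_of_lt hyn hRrh)).differentiableWithinAt
  have hps : HasFPowerSeriesOnBall g (cauchyPowerSeries g 0 R) 0 R :=
    hdo.hasFPowerSeriesOnBall (by exact_mod_cast hRpos)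
  set p := cauchyPowerSeries g 0 R with hpdef
  -- norm bound on coefficients
  have hcn : ∀ (n : ℕ) (y : ℂ), ‖p.coeff n * y ^ n‖ ≤ ‖p n‖ * ‖y‖ ^ n := by
    intro n y
    have h1 : p.coeff n * y ^ n = p n (fun _ => y) := by
      rw [FormalMultilinearSeries.apply_eq_pow_smul_coeff, smul_eq_mul, mul_comm]
    rw [h1]
    calc ‖p n (fun _ => y)‖ ≤ ‖p n‖ * ∏ _i : Fin n, ‖y‖ := (p n).le_opNorm _
      _ = ‖p n‖ * ‖y‖ ^ n := by rw [Finset.prod_const, Finset.card_univ, Fintype.card_fin]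
  have hradlt : ∀ y : ℂ, ‖y‖ < Rr → (‖y‖₊ : ENNReal) < p.radius := by
    intro y hy
    refine lt_of_lt_of_le ?_ hps.r_le
    exact_mod_cast hy
  have hsummableP : ∀ y : ℂ, ‖y‖ < Rr → Summable fun n => ‖p.coeff n * y ^ n‖ := by
    intro y hy
    have h1 := p.summable_norm_mul_pow (hradlt y hy)
    refine Summable.of_nonneg_of_le (fun n => norm_nonneg _) (fun n => ?_) h1
    have := hcn n y
    rwa [show ((‖y‖₊ : ℝ)) = ‖y‖ from rfl]
  have hgsum : ∀ y : ℂ, ‖y‖ < Rr → HasSum (fun n => p.coeff n * y ^ n) (g y) := by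
    intro y hy
    have hmem : y ∈ Metric.eball (0 : ℂ) R := by
      rw [EMetric.mem_ball, edist_zero_right]
      exact_mod_cast hy
    have h1 := hps.hasSum hmem
    simp only [FormalMultilinearSeries.apply_eq_pow_smul_coeff, smul_eq_mul, zero_add] at h1
    refine h1.congr_fun fun n => ?_
    ring
  -- convolution identity via uniqueness of power series
  set ρ : ℝ := min Rr (min r3 ρ₁) with hρdef
  have hρpos : 0 < ρ := lt_min hRpos (lt_min hr3pos hρ₁pos)
  have hρRr : ρ ≤ Rr := min_le_left _ _
  have hρr3 : ρ ≤ r3 := le_trans (min_le_right _ _) (min_le_left _ _)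
  have hρρ₁ : ρ ≤ ρ₁ := le_trans (min_le_right _ _) (min_le_right _ _)
  set conv : ℕ → ℂ := fun n => ∑ i ∈ Finset.range (n + 1), p.coeff i * a (q ^ (n - i))
    with hconvdef
  have hone : ∀ y : ℂ, ‖y‖ < ρ →
      HasSum (fun n => conv n * y ^ n) 1 ∧ Summable fun n => ‖conv n * y ^ n‖ := by
    intro y hy
    have h1 : Summable fun n => ‖p.coeff n * y ^ n‖ :=
      hsummableP y (lt_of_lt_of_le hy hρRr)
    have h2 : Summable fun n => ‖a (q ^ n) * y ^ n‖ :=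
      hbsum y (lt_of_lt_of_le hy (le_of_lt (lt_of_le_of_lt hρr3 hr3lam)))
    have hsum3 := summable_norm_sum_mul_range_of_summable_norm h1 h2
    have htsum := tsum_mul_tsum_eq_tsum_sum_range_of_summable_norm h1 h2
    have hterm : ∀ n : ℕ, (∑ i ∈ Finset.range (n + 1),
        (p.coeff i * y ^ i) * (a (q ^ (n - i)) * y ^ (n - i))) = conv n * y ^ n := by
      intro n
      rw [hconvdef]
      simp only
      rw [Finset.sum_mul]
      refine Finset.sum_congr rfl fun i hi => ?_
      have hi' : i ≤ n := Nat.lt_succ_iff.mp (Finset.mem_range.mp hi)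
      rw [show p.coeff i * y ^ i * (a (q ^ (n - i)) * y ^ (n - i)) =
        p.coeff i * a (q ^ (n - i)) * (y ^ i * y ^ (n - i)) by ring,
        ← pow_add, Nat.add_sub_cancel' hi']
    have hgy : (∑' n, p.coeff n * y ^ n) = g y :=
      (hgsum y (lt_of_lt_of_le hy hρRr)).tsum_eq
    have hfy : (∑' n, a (q ^ n) * y ^ n) = f y := rfl
    have hfy0 : f y ≠ 0 := hρ₁ y (lt_of_lt_of_le hy hρρ₁)
    have hval : (∑' n, conv n * y ^ n) = 1 := by
      rw [← tsum_congr hterm, ← htsum, hgy, hfy, hgf y (lt_of_lt_of_le hy hρr3),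
        inv_mul_cancel₀ hfy0]
    have hsummable : Summable fun n => ‖conv n * y ^ n‖ := by
      refine hsum3.congr fun n => ?_
      rw [hterm]
    exact ⟨hval ▸ hsummable.of_norm.hasSum, hsummable⟩
  set ρnn : NNReal := ⟨ρ / 2, by linarith⟩ with hρnndef
  have hρnncoe : (ρnn : ℝ) = ρ / 2 := rfl
  have hρnnlt : (ρ / 2 : ℝ) < ρ := by linarith
  have hρnnpos : (0 : NNReal) < ρnn := by
    rw [← NNReal.coe_lt_coe, hρnncoe]
    · positivity
  have hconv_ps : HasFPowerSeriesOnBall (fun _ : ℂ => (1 : ℂ))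
      (FormalMultilinearSeries.ofScalars ℂ conv) 0 ρnn := by
    constructor
    · apply FormalMultilinearSeries.le_radius_of_summable_norm
      have h2 := (hone ((ρ / 2 : ℝ) : ℂ) (by
        rw [Complex.norm_real, Real.norm_eq_abs, abs_of_pos (by linarith : (0:ℝ) < ρ/2)]
        exact hρnnlt)).2
      refine h2.congr fun n => ?_
      rw [norm_mul, norm_pow, Complex.norm_real, Real.norm_eq_abs,
        abs_of_pos (by linarith : (0:ℝ) < ρ/2)]
      rw [FormalMultilinearSeries.ofScalars_norm, hρnncoe]
    · exact_mod_cast hρnnpos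
    · intro y hy
      rw [EMetric.mem_ball, edist_zero_right] at hy
      have hy' : ‖y‖ < ρ := by
        have : ‖y‖ < (ρ / 2 : ℝ) := by exact_mod_cast hy
        linarith
      simp only [FormalMultilinearSeries.ofScalars_apply_eq, smul_eq_mul, zero_add]
      exact (hone y hy').1
  have hdelta_ps : HasFPowerSeriesOnBall (fun _ : ℂ => (1 : ℂ))
      (FormalMultilinearSeries.ofScalars ℂ (fun n : ℕ => if n = 0 then (1 : ℂ) else 0))
      0 ρnn := by
    constructor
    · apply FormalMultilinearSeries.le_radius_of_summable_norm
      refine Summable.of_nonneg_of_le (fun n => by positivity) (fun n => ?_)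
        ((hasSum_ite_eq (0 : ℕ) (1 : ℝ)).summable)
      rw [FormalMultilinearSeries.ofScalars_norm]
      rcases n with _ | n
      · simp
      · simp
    · exact_mod_cast hρnnpos
    · intro y hy
      simp only [FormalMultilinearSeries.ofScalars_apply_eq, smul_eq_mul, zero_add]
      have h1 : (fun n : ℕ => (if n = 0 then (1 : ℂ) else 0) * y ^ n)
          = fun n : ℕ => if n = 0 then (1 : ℂ) else 0 := by
        funext n
        rcases n with _ | n
        · simp
        · simp
      rw [h1]
      exact hasSum_ite_eq 0 1
  have hser : FormalMultilinearSeries.ofScalars ℂ conv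
      = FormalMultilinearSeries.ofScalars ℂ (fun n : ℕ => if n = 0 then (1 : ℂ) else 0) :=
    hconv_ps.hasFPowerSeriesAt.eq_formalMultilinearSeries hdelta_ps.hasFPowerSeriesAt
  have hconv_eq : conv = fun n : ℕ => if n = 0 then (1 : ℂ) else 0 :=
    FormalMultilinearSeries.ofScalars_series_injective ℂ ℂ hser
  have hrec : ∀ n : ℕ, (∑ i ∈ Finset.range (n + 1), p.coeff i * a (q ^ (n - i)))
      = if n = 0 then 1 else 0 := fun n => congrFun hconv_eq n
  -- identify E with the coefficients of g
  have hEc : ∀ n : ℕ, E n = p.coeff n := by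
    intro n
    induction n using Nat.strong_induction_on with
    | _ n ih =>
      have h1 := hinv n
      have h2 := hrec n
      rw [Finset.sum_range_succ] at h1 h2
      have hb0 : a (q ^ (n - n)) = 1 := by rw [Nat.sub_self, pow_zero, ha1]
      rw [hb0, mul_one] at h1 h2
      have hsum_eq : (∑ i ∈ Finset.range n, E i * a (q ^ (n - i)))
          = ∑ i ∈ Finset.range n, p.coeff i * a (q ^ (n - i)) :=
        Finset.sum_congr rfl fun i hi => by rw [ih i (Finset.mem_range.mp hi)]
      rw [hsum_eq] at h1
      have := h1.trans h2.symm
      exact add_left_cancel this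
  -- conclude
  have hfinal := p.summable_norm_mul_pow (hradlt z hzR)
  refine Summable.of_nonneg_of_le (fun j => by positivity) (fun j => ?_) hfinal
  rw [hEc j]
  calc ‖p.coeff j‖ * ‖z‖ ^ j = ‖p.coeff j * z ^ j‖ := by rw [norm_mul, norm_pow]
    _ ≤ ‖p j‖ * ‖z‖ ^ j := hcn j z
    _ = ‖p j‖ * (‖z‖₊ : ℝ) ^ j := rfl
end

section
/- An entire function g: ℂ → ℂ that is periodic with period 2πi/log q (for q > 1) and satisfies g(s) = O(q^{2|Re(s)|}) as Re(s) → −∞ uniformly in Im(s), and is bounded on every right half-plane Re(s) ≥ σ₀, is of the form g(s) = E(q^{-s}) for a polynomial E of degree at most 2. -/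
open Complex

/-- An entire function `g`, periodic with period `2πi/log q` (`q > 1`), with
`g(s) = O(q^{2|Re(s)|})` as `Re(s) → −∞` and bounded on every right half-plane,
is of the form `g(s) = E(q^{-s})` for a polynomial `E` of degree at most 2. -/
theorem periodic_entire_is_polynomial_in_qs (q : ℝ) (hq : 1 < q) (g : ℂ → ℂ)
    (hg : Differentiable ℂ g)
    (hper : ∀ s : ℂ, g (s + 2 * Real.pi * Complex.I / Real.log q) = g s)
    (C σ₁ : ℝ) (hC : 0 < C)
    (hleft : ∀ s : ℂ, s.re ≤ σ₁ → ‖g s‖ ≤ C * q ^ (2 * |s.re|))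
    (hright : ∀ σ₀ : ℝ, ∃ B : ℝ, ∀ s : ℂ, σ₀ ≤ s.re → ‖g s‖ ≤ B) :
    ∃ E : Polynomial ℂ, E.natDegree ≤ 2 ∧ ∀ s : ℂ, g s = E.eval ((q : ℂ) ^ (-s)) := by
  have hq0 : (0:ℝ) < q := lt_trans one_pos hq
  set L : ℝ := Real.log q with hLdef
  have hL : 0 < L := Real.log_pos hq
  have hL0 : (L : ℂ) ≠ 0 := by exact_mod_cast hL.ne'
  have h2πI : (2 : ℂ) * Real.pi * Complex.I ≠ 0 := Complex.two_pi_I_ne_zero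
  -- the conjugated periodic function
  set f : ℂ → ℂ := fun z => g (-(2 * Real.pi * Complex.I / L) * z) with hfdef
  have hfd : Differentiable ℂ f := hg.comp (differentiable_id.const_mul _)
  have hfp : Function.Periodic f 1 := by
    intro z
    have harg : -(2 * (Real.pi:ℂ) * Complex.I / L) * (z + 1)
        = (-(2 * (Real.pi:ℂ) * Complex.I / L) * z - 2 * Real.pi * Complex.I / L) := by ring
    have := hper (-(2 * (Real.pi:ℂ) * Complex.I / L) * z - 2 * Real.pi * Complex.I / L)
    rw [sub_add_cancel] at this
    simpa only [hfdef, harg] using this.symm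
  -- cpow as exp
  have hcpow : ∀ s : ℂ, (q:ℂ) ^ (-s) = Complex.exp (-s * L) := by
    intro s
    rw [Complex.cpow_def_of_ne_zero (by exact_mod_cast hq0.ne'), ← Complex.ofReal_log hq0.le,
      mul_comm]
  -- real part of the argument
  have hres : ∀ z : ℂ, (-(2 * (Real.pi:ℂ) * Complex.I / L) * z).re = 2 * Real.pi / L * z.im := by
    intro z
    have : -(2 * (Real.pi:ℂ) * Complex.I / L) * z
        = ((2 * Real.pi / L : ℝ) : ℂ) * (Complex.I * z) * (-1) := by
      push_cast
      field_simp
    rw [this]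
    simp [Complex.I_mul_re]
  set F : ℂ → ℂ := Function.Periodic.cuspFunction 1 f with hFdef
  have hFf : ∀ z : ℂ, F (Function.Periodic.qParam 1 z) = f z :=
    fun z => Function.Periodic.eq_cuspFunction one_ne_zero hfp z
  -- q^{-s} is in the image of qParam
  have hqP : ∀ s : ℂ, (q:ℂ) ^ (-s) = Function.Periodic.qParam 1 (-(L:ℂ) * s / (2 * Real.pi * Complex.I)) := by
    intro s
    rw [hcpow, Function.Periodic.qParam]
    congr 1
    push_cast
    field_simp
  have hFg : ∀ s : ℂ, F ((q:ℂ) ^ (-s)) = g s := by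
    intro s
    rw [hqP, hFf]
    simp only [hfdef]
    congr 1
    field_simp
  -- boundedness at I∞
  obtain ⟨B, hB⟩ := hright 0
  have hbdd : Filter.BoundedAtFilter (Filter.comap Complex.im Filter.atTop) f := by
    rw [Filter.BoundedAtFilter]
    rw [Asymptotics.isBigO_iff]
    refine ⟨B, ?_⟩
    have him : ∀ᶠ z : ℂ in Filter.comap Complex.im Filter.atTop, (0:ℝ) ≤ z.im :=
      Filter.Eventually.comap (Filter.eventually_ge_atTop 0) Complex.im
    filter_upwards [him] with z hz
    simp only [Pi.one_apply, norm_one, mul_one]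
    refine hB _ ?_
    rw [hres z]
    positivity
  have hFd : Differentiable ℂ F := by
    intro w
    by_cases hw : w = 0
    · subst hw
      exact Function.Periodic.differentiableAt_cuspFunction_zero one_pos hfp
        (Filter.Eventually.of_forall fun z => hfd z) hbdd
    · rw [← Function.Periodic.qParam_right_inv one_ne_zero hw]
      exact Function.Periodic.differentiableAt_cuspFunction one_ne_zero hfp (hfd _)
  -- growth of F
  set R : ℝ := max 1 (q ^ (-σ₁)) with hRdef
  have hR1 : (1:ℝ) ≤ R := le_max_left _ _
  have hgrow : ∀ w : ℂ, R ≤ ‖w‖ → ‖F w‖ ≤ C * ‖w‖ ^ 2 := by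
    intro w hw
    have hw1 : (1:ℝ) ≤ ‖w‖ := le_trans hR1 hw
    have hw0 : w ≠ 0 := by
      intro h; rw [h] at hw1; simp at hw1; linarith
    have hwpos : (0:ℝ) < ‖w‖ := lt_of_lt_of_le one_pos hw1
    have hlog0 : 0 ≤ Real.log ‖w‖ := Real.log_nonneg hw1
    -- F w = g s with s = -(log w)/L
    have hFw : F w = g (-(Complex.log w) / L) := by
      rw [hFdef, Function.Periodic.cuspFunction_eq_of_nonzero _ _ hw0]
      simp only [Function.comp_apply, hfdef, Function.Periodic.invQParam]
      congr 1
      field_simp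
      norm_num
    set s : ℂ := -(Complex.log w) / L with hsdef
    have hsre : s.re = -(Real.log ‖w‖) / L := by
      rw [hsdef]
      rw [Complex.div_ofReal_re]
      simp [Complex.log_re]
    have hsσ : s.re ≤ σ₁ := by
      have h1 : q ^ (-σ₁) ≤ ‖w‖ := le_trans (le_max_right _ _) hw
      have h2 : Real.log (q ^ (-σ₁)) ≤ Real.log ‖w‖ :=
        Real.log_le_log (Real.rpow_pos_of_pos hq0 _) h1
      rw [Real.log_rpow hq0] at h2
      rw [hsre, div_le_iff₀ hL]
      nlinarith
    have hsre0 : s.re ≤ 0 := by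
      rw [hsre]
      apply div_nonpos_of_nonpos_of_nonneg <;> linarith
    have habs : |s.re| = Real.log ‖w‖ / L := by
      rw [abs_of_nonpos hsre0, hsre]
      ring
    have hqpow : q ^ (2 * |s.re|) = ‖w‖ ^ 2 := by
      rw [habs, Real.rpow_def_of_pos hq0]
      have : Real.log q * (2 * (Real.log ‖w‖ / L)) = Real.log (‖w‖ ^ 2) := by
        rw [Real.log_pow]
        push_cast
        field_simp
        rw [hLdef]; ring
      rw [this, Real.exp_log (by positivity)]
    calc ‖F w‖ = ‖g s‖ := by rw [hFw]
      _ ≤ C * q ^ (2 * |s.re|) := hleft s hsσ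
      _ = C * ‖w‖ ^ 2 := by rw [hqpow]
  -- dslope machinery
  set k1 : ℂ → ℂ := dslope F 0 with hk1def
  set k2 : ℂ → ℂ := dslope k1 0 with hk2def
  have hk1d : Differentiable ℂ k1 := by
    rw [← differentiableOn_univ] at hFd ⊢
    exact (Complex.differentiableOn_dslope Filter.univ_mem).mpr hFd
  have hk2d : Differentiable ℂ k2 := by
    rw [← differentiableOn_univ] at hk1d ⊢
    exact (Complex.differentiableOn_dslope Filter.univ_mem).mpr hk1d
  have hFk1 : ∀ z : ℂ, F z = F 0 + z * k1 z := by
    intro z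
    have := sub_smul_dslope F 0 z
    rw [sub_zero, smul_eq_mul] at this
    rw [← hk1def] at this
    linear_combination -this
  have hk1k2 : ∀ z : ℂ, k1 z = k1 0 + z * k2 z := by
    intro z
    have := sub_smul_dslope k1 0 z
    rw [sub_zero, smul_eq_mul] at this
    rw [← hk2def] at this
    linear_combination -this
  -- bound for k1 on ‖z‖ ≥ R
  have hk1bd : ∀ z : ℂ, R ≤ ‖z‖ → ‖k1 z‖ ≤ (C + ‖F 0‖) * ‖z‖ := by
    intro z hz
    have hz1 : (1:ℝ) ≤ ‖z‖ := le_trans hR1 hz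
    have hzpos : (0:ℝ) < ‖z‖ := lt_of_lt_of_le one_pos hz1
    have hmul : ‖z‖ * ‖k1 z‖ ≤ C * ‖z‖ ^ 2 + ‖F 0‖ := by
      have h1 : ‖z * k1 z‖ = ‖F z - F 0‖ := by
        rw [show z * k1 z = F z - F 0 by linear_combination -hFk1 z]
      rw [← norm_mul, h1]
      calc ‖F z - F 0‖ ≤ ‖F z‖ + ‖F 0‖ := norm_sub_le _ _
        _ ≤ C * ‖z‖ ^ 2 + ‖F 0‖ := by linarith [hgrow z hz]
    have hsq : (1:ℝ) ≤ ‖z‖ ^ 2 := by nlinarith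
    have hkey : ‖z‖ * ‖k1 z‖ ≤ ‖z‖ * ((C + ‖F 0‖) * ‖z‖) := by
      nlinarith [mul_le_mul_of_nonneg_left hsq (norm_nonneg (F 0))]
    exact le_of_mul_le_mul_left hkey hzpos
  have hk2bd : ∀ z : ℂ, R ≤ ‖z‖ → ‖k2 z‖ ≤ C + ‖F 0‖ + ‖k1 0‖ := by
    intro z hz
    have hz1 : (1:ℝ) ≤ ‖z‖ := le_trans hR1 hz
    have hzpos : (0:ℝ) < ‖z‖ := lt_of_lt_of_le one_pos hz1
    have hmul : ‖z‖ * ‖k2 z‖ ≤ (C + ‖F 0‖) * ‖z‖ + ‖k1 0‖ := by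
      have h1 : ‖z * k2 z‖ = ‖k1 z - k1 0‖ := by
        rw [show z * k2 z = k1 z - k1 0 by linear_combination -hk1k2 z]
      rw [← norm_mul, h1]
      calc ‖k1 z - k1 0‖ ≤ ‖k1 z‖ + ‖k1 0‖ := norm_sub_le _ _
        _ ≤ (C + ‖F 0‖) * ‖z‖ + ‖k1 0‖ := by linarith [hk1bd z hz]
    have hkey : ‖z‖ * ‖k2 z‖ ≤ ‖z‖ * (C + ‖F 0‖ + ‖k1 0‖) := by
      nlinarith [mul_le_mul_of_nonneg_left hz1 (norm_nonneg (k1 0))]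
    exact le_of_mul_le_mul_left hkey hzpos
  -- k2 is bounded, hence constant
  obtain ⟨M, hM⟩ := (isCompact_closedBall (0:ℂ) R).exists_bound_of_continuousOn
    hk2d.continuous.continuousOn
  have hk2bdd : Bornology.IsBounded (Set.range k2) := by
    rw [isBounded_iff_forall_norm_le]
    refine ⟨max M (C + ‖F 0‖ + ‖k1 0‖), ?_⟩
    rintro x ⟨z, rfl⟩
    rcases le_total ‖z‖ R with h | h
    · exact le_trans (hM z (by simpa [Metric.mem_closedBall, dist_eq_norm] using h))
        (le_max_left _ _)
    · exact le_trans (hk2bd z h) (le_max_right _ _)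
  have hk2const : ∀ z : ℂ, k2 z = k2 0 :=
    fun z => hk2d.apply_eq_apply_of_bounded hk2bdd z 0
  -- conclude
  refine ⟨Polynomial.C (F 0) + Polynomial.C (k1 0) * Polynomial.X
    + Polynomial.C (k2 0) * Polynomial.X ^ 2, ?_, ?_⟩
  · compute_degree
  · intro s
    rw [← hFg s]
    set w : ℂ := (q:ℂ) ^ (-s)
    simp only [Polynomial.eval_add, Polynomial.eval_mul, Polynomial.eval_pow,
      Polynomial.eval_C, Polynomial.eval_X]
    rw [hFk1 w, hk1k2 w, hk2const w]
    ring
end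

section
/- Let D(s) = ∑_{n≥1} c_n n^{-s} be a nonzero Dirichlet polynomial (finitely many c_n nonzero) with no zeros in ℂ. Then D(s) = c_m·m^{-s} for a single index m, i.e., exactly one coefficient is nonzero. In particular, if additionally c_1 = 1 and D is zero-free, then D ≡ 1. -/
open Complex Finset
open Metric Filter

lemma entire_primitive {h : ℂ → ℂ} (hh : Differentiable ℂ h) :
    ∃ g : ℂ → ℂ, ∀ z, HasDerivAt g (h z) z := by
  set a : ℕ → ℂ := fun n => (n.factorial : ℂ)⁻¹ * iteratedDeriv n h 0 with ha
  have hsum : ∀ z : ℂ, HasSum (fun n : ℕ => a n * z ^ n) (h z) := by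
    intro z
    have := hasSum_taylorSeries_of_entire hh 0 z
    simpa [a, smul_eq_mul, mul_comm, mul_assoc, mul_left_comm] using this
  set F : ℕ → ℂ → ℂ := fun n w => (a n / (n + 1)) * w ^ (n + 1) with hF
  refine ⟨fun z => ∑' n, F n z, ?_⟩
  intro z₀
  set R : ℝ := ‖z₀‖ + 1 with hR
  have hR0 : 0 < R := by positivity
  have hz₀ : z₀ ∈ ball (0 : ℂ) R := by
    simp only [mem_ball, dist_eq_norm, sub_zero, hR]
    linarith
  set u : ℕ → ℝ := fun n => R * ‖a n * (R : ℂ) ^ n‖ with hu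
  have husum : Summable u := ((hsum (R : ℂ)).summable.norm.mul_left R)
  have hFd : ∀ n : ℕ, DifferentiableOn ℂ (F n) (ball (0:ℂ) R) := fun n =>
    ((differentiable_pow _).differentiableOn).const_mul _
  have hF_le : ∀ (n : ℕ) (w : ℂ), w ∈ ball (0:ℂ) R → ‖F n w‖ ≤ u n := by
    intro n w hw
    rw [mem_ball, dist_eq_norm, sub_zero] at hw
    have h1 : ‖F n w‖ ≤ ‖a n‖ * ‖w‖ ^ (n + 1) := by
      rw [hF, norm_mul, norm_pow, norm_div]
      have hn : (1:ℝ) ≤ ‖((n : ℂ) + 1)‖ := by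
        have : ((n : ℂ) + 1) = ((n + 1 : ℕ) : ℂ) := by push_cast; ring
        rw [this, Complex.norm_natCast]
        exact_mod_cast Nat.one_le_iff_ne_zero.mpr (Nat.succ_ne_zero n)
      have := div_le_self (norm_nonneg (a n)) hn
      exact mul_le_mul_of_nonneg_right this (by positivity)
    have h2 : ‖a n‖ * ‖w‖ ^ (n + 1) ≤ ‖a n‖ * R ^ (n + 1) := by
      apply mul_le_mul_of_nonneg_left _ (norm_nonneg _)
      exact pow_le_pow_left₀ (norm_nonneg _) hw.le _
    refine h1.trans (h2.trans (le_of_eq ?_))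
    simp only [hu, norm_mul, norm_pow, Complex.norm_real, Real.norm_of_nonneg hR0.le, pow_succ]
    ring
  have hgd : DifferentiableOn ℂ (fun w : ℂ => ∑' n, F n w) (ball (0:ℂ) R) :=
    differentiableOn_tsum_of_summable_norm husum hFd isOpen_ball hF_le
  have hderiv : HasSum (fun n : ℕ => deriv (F n) z₀)
      (deriv (fun w : ℂ => ∑' n, F n w) z₀) :=
    hasSum_deriv_of_summable_norm husum hFd isOpen_ball hF_le hz₀
  have hFderiv : ∀ n : ℕ, deriv (F n) z₀ = a n * z₀ ^ n := by
    intro n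
    have hd : HasDerivAt (F n) (a n / (n+1) * ((n+1 : ℕ) * z₀ ^ (n + 1 - 1))) z₀ :=
      (hasDerivAt_pow (n+1) z₀).const_mul _
    rw [hd.deriv]
    push_cast

    have hne : ((n : ℂ) + 1) ≠ 0 := Nat.cast_add_one_ne_zero n
    field_simp
  have hds : deriv (fun w : ℂ => ∑' n, F n w) z₀ = h z₀ := by
    have : HasSum (fun n : ℕ => a n * z₀ ^ n)
        (deriv (fun w : ℂ => ∑' n, F n w) z₀) := by
      convert hderiv using 1
      ext n; exact (hFderiv n).symm
    exact (this.unique (hsum z₀))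
  have := (hgd.differentiableAt (isOpen_ball.mem_nhds hz₀)).hasDerivAt
  rwa [hds] at this

lemma entire_log {D : ℂ → ℂ} (hD : Differentiable ℂ D) (hzf : ∀ z, D z ≠ 0) :
    ∃ g : ℂ → ℂ, Differentiable ℂ g ∧ ∀ z, D z = Complex.exp (g z) := by
  have hDa : AnalyticOnNhd ℂ D Set.univ := analyticOnNhd_univ_iff_differentiable.mpr hD
  have hD' : Differentiable ℂ (deriv D) := by
    have := hDa.deriv
    rw [← analyticOnNhd_univ_iff_differentiable]
    exact this
  have hh : Differentiable ℂ (fun z => deriv D z / D z) := hD'.div hD hzf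
  obtain ⟨g₀, hg₀⟩ := entire_primitive hh
  have hg₀d : Differentiable ℂ g₀ := fun z => (hg₀ z).differentiableAt
  -- D z * exp (-g₀ z) is constant
  have hconst : ∀ z, D z * Complex.exp (-g₀ z) = D 0 * Complex.exp (-g₀ 0) := by
    have hd0 : ∀ z, HasDerivAt (fun w => D w * Complex.exp (-g₀ w)) 0 z := by
      intro z
      have h1 : HasDerivAt D (deriv D z) z := (hD z).hasDerivAt
      have h2 : HasDerivAt (fun w => Complex.exp (-g₀ w))
          (Complex.exp (-g₀ z) * -(deriv D z / D z)) z := by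
        have := ((hg₀ z).neg).cexp
        simpa using this
      have := h1.mul h2
      refine this.congr_deriv ?_
      have hne := hzf z
      linear_combination (-cexp (-g₀ z)) * (mul_div_cancel₀ (deriv D z) hne)
    intro z
    exact is_const_of_deriv_eq_zero (fun w => (hd0 w).differentiableAt)
      (fun w => (hd0 w).deriv) z 0
  set κ : ℂ := D 0 * Complex.exp (-g₀ 0) with hκ
  have hκne : κ ≠ 0 := mul_ne_zero (hzf 0) (Complex.exp_ne_zero _)
  refine ⟨fun z => g₀ z + Complex.log κ, hg₀d.add_const _, fun z => ?_⟩
  rw [Complex.exp_add, Complex.exp_log hκne]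
  have := hconst z
  have hexp := Complex.exp_ne_zero (-g₀ z)
  have h1 : cexp (-g₀ z) * cexp (g₀ z) = 1 := by rw [← Complex.exp_add]; simp
  linear_combination cexp (g₀ z) * this - D z * h1

lemma deriv_bound_of_re_le {g : ℂ → ℂ} (hg : Differentiable ℂ g) {A B : ℝ}
    (hA : 0 ≤ A) (hB : 0 ≤ B) (hre : ∀ z, (g z).re ≤ A + B * ‖z‖) :
    ∀ c, ‖deriv g c‖ ≤ 2 * B := by
  intro c
  have key : ∀ R : ℝ, 0 < R →
      ‖deriv g c‖ ≤ 2 * (A + B * ‖c‖ + B * R + ‖g c‖ + 1) / R := by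
    intro R hR0
    set M : ℝ := A + B * ‖c‖ + B * R + ‖g c‖ + 1 with hM
    have hM0 : 0 < M := by positivity
    set N : ℝ := 2 * M with hN
    have hN0 : 0 < N := by positivity
    clear_value M N
    have hre' : ∀ z ∈ ball c R, (g z - g c).re ≤ M - 1 := by
      intro z hz
      rw [mem_ball, dist_eq_norm] at hz
      have h1 : ‖z‖ ≤ ‖c‖ + R := by
        calc ‖z‖ = ‖c + (z - c)‖ := by ring_nf
          _ ≤ ‖c‖ + ‖z - c‖ := norm_add_le _ _
          _ ≤ ‖c‖ + R := by linarith
      have h2 : (g z).re ≤ A + B * (‖c‖ + R) := by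
        have := hre z
        nlinarith
      have h3 : -(g c).re ≤ ‖g c‖ := by
        have h4 := Complex.abs_re_le_norm (g c)
        have h5 := neg_abs_le ((g c).re)
        linarith
      simp only [Complex.sub_re]
      rw [hM]
      linarith [h3, h2]
    have hden : ∀ z ∈ ball c R, (N : ℂ) - (g z - g c) ≠ 0 := by
      intro z hz hzero
      have h0 : ((N : ℂ) - (g z - g c)).re = 0 := by rw [hzero]; rfl
      simp only [Complex.sub_re, Complex.ofReal_re] at h0
      have := hre' z hz
      simp only [Complex.sub_re] at this
      rw [hN] at h0
      linarith
    set w : ℂ → ℂ := fun z => (g z - g c) / ((N : ℂ) - (g z - g c)) with hw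
    have hwd : DifferentiableOn ℂ w (ball c R) := by
      apply DifferentiableOn.div
      · exact ((hg.sub_const (g c)).differentiableOn)
      · exact (differentiable_const _).differentiableOn.sub
          ((hg.sub_const (g c)).differentiableOn)
      · exact hden
    have hwc : w c = 0 := by simp [hw]
    have hmaps : Set.MapsTo w (ball c R) (ball (w c) 1) := by
      intro z hz
      rw [hwc, mem_ball, dist_eq_norm, sub_zero, hw]
      simp only
      rw [norm_div]
      have hdenne := hden z hz
      have hdenpos : 0 < ‖(N : ℂ) - (g z - g c)‖ := norm_pos_iff.mpr hdenne
      rw [div_lt_one hdenpos]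
      have hφ := hre' z hz
      have hsq : ‖g z - g c‖ ^ 2 < ‖(N : ℂ) - (g z - g c)‖ ^ 2 := by
        have e1 : ‖g z - g c‖ ^ 2 = Complex.normSq (g z - g c) := by
          rw [Complex.sq_norm]
        have e2 : ‖(N : ℂ) - (g z - g c)‖ ^ 2 = Complex.normSq ((N : ℂ) - (g z - g c)) := by
          rw [Complex.sq_norm]
        rw [e1, e2]
        simp only [Complex.normSq_apply, Complex.sub_re, Complex.sub_im,
          Complex.ofReal_re, Complex.ofReal_im]
        simp only [Complex.sub_re] at hφ
        nlinarith [hφ, hM0, hN]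
      nlinarith [norm_nonneg (g z - g c), hdenpos]
    have hschwarz := Complex.norm_deriv_le_div_of_mapsTo_ball hwd (hmaps.mono_right ball_subset_closedBall) hR0
    have hdw : deriv w c = deriv g c / (N : ℂ) := by
      have h1 : HasDerivAt (fun z => g z - g c) (deriv g c) c :=
        ((hg c).hasDerivAt).sub_const (g c)
      have h2 : HasDerivAt (fun z => (N : ℂ) - (g z - g c)) (-(deriv g c)) c :=
        h1.const_sub (N : ℂ)
      have h3 := h1.div h2 (hden c (mem_ball_self hR0))
      have h4 := h3.deriv
      rw [hw]
      rw [show (fun z => (g z - g c) / ((N : ℂ) - (g z - g c)))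
        = ((fun z => g z - g c) / fun z => (N : ℂ) - (g z - g c)) from rfl, h4]
      have hcc : g c - g c = 0 := sub_self _
      rw [hcc]
      have hNne : (N : ℂ) ≠ 0 := by
        simpa using Complex.ofReal_ne_zero.mpr hN0.ne'
      field_simp
      ring
    rw [hdw, norm_div] at hschwarz
    have hnormN : ‖((N : ℝ) : ℂ)‖ = N := by
      rw [Complex.norm_real, Real.norm_of_nonneg hN0.le]
    rw [hnormN, div_le_div_iff₀ hN0 hR0] at hschwarz
    rw [le_div_iff₀ hR0]
    linarith
  have hlim : Filter.Tendsto (fun R : ℝ => 2 * (A + B * ‖c‖ + B * R + ‖g c‖ + 1) / R)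
      Filter.atTop (nhds (2 * B)) := by
    have heq : (fun R : ℝ => 2 * (A + B * ‖c‖ + B * R + ‖g c‖ + 1) / R)
        =ᶠ[Filter.atTop] fun R => 2 * B + 2 * (A + B * ‖c‖ + ‖g c‖ + 1) / R := by
      filter_upwards [Filter.eventually_gt_atTop (0:ℝ)] with R hR
      field_simp
      ring
    rw [Filter.tendsto_congr' heq]
    have h2 : Filter.Tendsto (fun R : ℝ => 2 * (A + B * ‖c‖ + ‖g c‖ + 1) / R)
        Filter.atTop (nhds 0) :=
      Filter.Tendsto.div_atTop tendsto_const_nhds Filter.tendsto_id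
    simpa using (tendsto_const_nhds.add h2)
  exact ge_of_tendsto hlim (Filter.eventually_atTop.mpr
    ⟨1, fun R hR => key R (by linarith)⟩)

lemma entire_linear_of_re_le {g : ℂ → ℂ} (hg : Differentiable ℂ g) {A B : ℝ}
    (hA : 0 ≤ A) (hB : 0 ≤ B) (hre : ∀ z, (g z).re ≤ A + B * ‖z‖) :
    ∃ a b : ℂ, ∀ z, g z = a + b * z := by
  have hbd := deriv_bound_of_re_le hg hA hB hre
  have hderiv_diff : Differentiable ℂ (deriv g) := by
    rw [← analyticOnNhd_univ_iff_differentiable]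
    exact (analyticOnNhd_univ_iff_differentiable.mpr hg).deriv
  have hbounded : Bornology.IsBounded (Set.range (deriv g)) := by
    rw [isBounded_iff_forall_norm_le]
    exact ⟨2 * B, by rintro x ⟨c, rfl⟩; exact hbd c⟩
  obtain ⟨b, hb⟩ := hderiv_diff.exists_const_forall_eq_of_bounded hbounded
  refine ⟨g 0, b, ?_⟩
  have hu : ∀ z, HasDerivAt (fun w => g w - b * w) 0 z := by
    intro z
    have h1 : HasDerivAt g (deriv g z) z := (hg z).hasDerivAt
    have h2 : HasDerivAt (fun w : ℂ => b * w) b z := by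
      simpa using (hasDerivAt_id z).const_mul b
    have := h1.sub h2
    rw [hb z, sub_self] at this
    exact this
  intro z
  have := is_const_of_deriv_eq_zero (fun w => (hu w).differentiableAt)
    (fun w => (hu w).deriv) z 0
  simp only [mul_zero, sub_zero] at this
  linear_combination this

lemma exp_limit_zero {C L w : ℂ} (hC : C ≠ 0) (hL : L ≠ 0)
    (h : Filter.Tendsto (fun σ : ℝ => C * Complex.exp (w * σ)) Filter.atTop (nhds L)) :
    w = 0 := by
  have hre : w.re = 0 := by
    by_contra hne
    have hnorm : Filter.Tendsto (fun σ : ℝ => ‖C‖ * Real.exp (w.re * σ))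
        Filter.atTop (nhds ‖L‖) := by
      have := h.norm
      convert this using 2 with σ
      rw [norm_mul, Complex.norm_exp]
      congr 2
      simp [Complex.mul_re]
    rcases lt_or_gt_of_ne hne with hlt | hgt
    · -- w.re < 0 : exp → 0, so ‖L‖ = 0
      have h0 : Filter.Tendsto (fun σ : ℝ => ‖C‖ * Real.exp (w.re * σ))
          Filter.atTop (nhds (‖C‖ * 0)) := by
        apply Filter.Tendsto.const_mul
        apply Real.tendsto_exp_atBot.comp
        exact Filter.Tendsto.const_mul_atTop_of_neg hlt Filter.tendsto_id
      have := tendsto_nhds_unique hnorm h0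
      rw [mul_zero] at this
      exact hL (norm_eq_zero.mp this)
    · -- w.re > 0 : exp → ∞
      have h0 : Filter.Tendsto (fun σ : ℝ => ‖C‖ * Real.exp (w.re * σ))
          Filter.atTop Filter.atTop := by
        apply Filter.Tendsto.const_mul_atTop (norm_pos_iff.mpr hC)
        apply Real.tendsto_exp_atTop.comp
        exact Filter.Tendsto.const_mul_atTop hgt Filter.tendsto_id
      exact (not_tendsto_nhds_of_tendsto_atTop h0 _ hnorm).elim
  -- now w = I * w.im ; shift trick
  have him : w.im = 0 := by
    by_contra hne
    have himne : (w.im : ℂ) ≠ 0 := Complex.ofReal_ne_zero.mpr hne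
    have hw : w = (w.im : ℂ) * Complex.I := by
      apply Complex.ext <;> simp [hre]
    have hshift : Filter.Tendsto
        (fun σ : ℝ => C * Complex.exp (w * ((σ + Real.pi / w.im : ℝ) : ℂ)))
        Filter.atTop (nhds L) :=
      h.comp (Filter.tendsto_atTop_add_const_right Filter.atTop (Real.pi / w.im)
        Filter.tendsto_id)
    have hneg : ∀ σ : ℝ, C * Complex.exp (w * ((σ + Real.pi / w.im : ℝ) : ℂ))
        = - (C * Complex.exp (w * σ)) := by
      intro σ
      have hsplit : w * ((σ + Real.pi / w.im : ℝ) : ℂ) = w * σ + Real.pi * Complex.I := by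
        rw [hw]
        have h' : ((w.im : ℂ) * Complex.I).im = w.im := by simp
        rw [h']
        push_cast
        field_simp
      rw [hsplit, Complex.exp_add, Complex.exp_pi_mul_I]
      ring
    simp only [hneg] at hshift
    have := tendsto_nhds_unique hshift (h.neg)
    have hL2 : L = -L := this
    apply hL
    have : (2 : ℂ) * L = 0 := by linear_combination hL2
    simpa using this
  exact Complex.ext hre him

lemma tendsto_cexp_mul_zero {d : ℝ} (hd : d < 0) (cc : ℂ) :
    Tendsto (fun σ : ℝ => cc * Complex.exp ((d : ℂ) * σ)) atTop (nhds 0) := by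
  have hb : ∀ σ : ℝ, ‖cc * Complex.exp ((d : ℂ) * σ)‖ ≤ ‖cc‖ * Real.exp (d * σ) := by
    intro σ
    rw [norm_mul]
    apply mul_le_mul_of_nonneg_left _ (norm_nonneg _)
    rw [Complex.norm_exp]
    apply le_of_eq
    congr 1
    simp [Complex.mul_re]
  have h1 : Tendsto (fun σ : ℝ => d * σ) atTop atBot :=
    Tendsto.const_mul_atTop_of_neg hd tendsto_id
  have h2 := Real.tendsto_exp_atBot.comp h1
  have h3 : Tendsto (fun σ : ℝ => ‖cc‖ * Real.exp (d * σ)) atTop (nhds 0) := by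
    simpa using (h2.const_mul ‖cc‖)
  exact squeeze_zero_norm hb h3


/-- A nonzero Dirichlet polynomial `D(s) = ∑_{n=1}^K c_n n^{-s}` with no zeros
in `ℂ` is a monomial `c_m m^{-s}`: exactly one coefficient is nonzero. If
additionally `c_1 = 1`, then `D ≡ 1`. -/
theorem zero_free_dirichlet_polynomial_is_monomial (K : ℕ) (hK : 0 < K)
    (c : ℕ → ℂ) (D : ℂ → ℂ)
    (hD : ∀ s : ℂ, D s = ∑ n ∈ Finset.Icc 1 K, c n * (n : ℂ) ^ (-s))
    (hzf : ∀ s : ℂ, D s ≠ 0) :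
    (∃ m ∈ Finset.Icc 1 K, c m ≠ 0 ∧
        (∀ n ∈ Finset.Icc 1 K, n ≠ m → c n = 0) ∧
        ∀ s : ℂ, D s = c m * (m : ℂ) ^ (-s)) ∧
      (c 1 = 1 → ∀ s : ℂ, D s = 1) := by
  classical
  have hD' : ∀ s : ℂ, D s = ∑ n ∈ Finset.Icc 1 K,
      c n * Complex.exp ((-(Real.log n : ℂ)) * s) := by
    intro s
    rw [hD]
    refine Finset.sum_congr rfl fun n hn => ?_
    have hn1 : 1 ≤ n := (Finset.mem_Icc.mp hn).1
    have hne : (n : ℂ) ≠ 0 := Nat.cast_ne_zero.mpr (by omega)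
    rw [Complex.cpow_def_of_ne_zero hne]
    congr 1
    rw [← Complex.natCast_log]
    ring
  -- the support
  set S : Finset ℕ := (Finset.Icc 1 K).filter (fun n => c n ≠ 0) with hSdef
  have hSne : S.Nonempty := by
    by_contra hemp
    rw [Finset.not_nonempty_iff_eq_empty] at hemp
    refine hzf 0 ?_
    rw [hD 0]
    refine Finset.sum_eq_zero fun n hn => ?_
    by_cases h : c n = 0
    · rw [h, zero_mul]
    · have hmem : n ∈ S := by rw [hSdef]; exact Finset.mem_filter.mpr ⟨hn, h⟩
      rw [hemp] at hmem
      exact absurd hmem (Finset.notMem_empty n)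
  set m := S.min' hSne with hmdef
  set M := S.max' hSne with hMdef
  have hmS : m ∈ S := S.min'_mem hSne
  have hMS : M ∈ S := S.max'_mem hSne
  have hmIcc : m ∈ Finset.Icc 1 K := (Finset.mem_filter.mp hmS).1
  have hMIcc : M ∈ Finset.Icc 1 K := (Finset.mem_filter.mp hMS).1
  have hcm : c m ≠ 0 := (Finset.mem_filter.mp hmS).2
  have hcM : c M ≠ 0 := (Finset.mem_filter.mp hMS).2
  have hm1 : 1 ≤ m := (Finset.mem_Icc.mp hmIcc).1
  have hM1 : 1 ≤ M := (Finset.mem_Icc.mp hMIcc).1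
  -- the key analytic fact
  have hmM : m = M := by
    have hDdiff : Differentiable ℂ D := by
      have hDfun : D = fun s => ∑ n ∈ Finset.Icc 1 K,
          c n * Complex.exp ((-(Real.log n : ℂ)) * s) := funext hD'
      rw [hDfun]
      apply Differentiable.fun_sum
      intro n _
      exact ((differentiable_id.const_mul _).cexp).const_mul _
    obtain ⟨g, hgdiff, hgexp⟩ := entire_log hDdiff hzf
    -- growth bound
    set Cc : ℝ := 1 + ∑ n ∈ Finset.Icc 1 K, ‖c n‖ with hCc
    have hCc1 : 1 ≤ Cc := by
      have : 0 ≤ ∑ n ∈ Finset.Icc 1 K, ‖c n‖ :=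
        Finset.sum_nonneg fun n _ => norm_nonneg _
      linarith
    have hCc0 : 0 < Cc := by linarith
    set A : ℝ := Real.log Cc with hA
    set B : ℝ := Real.log K with hB
    have hA0 : 0 ≤ A := Real.log_nonneg hCc1
    have hB0 : 0 ≤ B := Real.log_nonneg (by exact_mod_cast hK)
    have hre : ∀ z, (g z).re ≤ A + B * ‖z‖ := by
      intro z
      have hnorm : ‖D z‖ ≤ Cc * Real.exp (B * ‖z‖) := by
        rw [hD' z]
        calc ‖∑ n ∈ Finset.Icc 1 K, c n * Complex.exp ((-(Real.log n : ℂ)) * z)‖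
            ≤ ∑ n ∈ Finset.Icc 1 K, ‖c n * Complex.exp ((-(Real.log n : ℂ)) * z)‖ :=
              norm_sum_le _ _
          _ ≤ ∑ n ∈ Finset.Icc 1 K, ‖c n‖ * Real.exp (B * ‖z‖) := by
              refine Finset.sum_le_sum fun n hn => ?_
              rw [norm_mul]
              refine mul_le_mul_of_nonneg_left ?_ (norm_nonneg _)
              rw [Complex.norm_exp]
              apply Real.exp_le_exp.mpr
              have hre1 : ((-(Real.log n : ℂ)) * z).re = -(Real.log n) * z.re := by
                simp [Complex.mul_re, ← Complex.natCast_log]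
              rw [hre1]
              have hlogn0 : 0 ≤ Real.log n :=
                Real.log_nonneg (by exact_mod_cast (Finset.mem_Icc.mp hn).1)
              have hlognB : Real.log n ≤ B := by
                rw [hB]
                apply Real.log_le_log (by exact_mod_cast (Finset.mem_Icc.mp hn).1)
                exact_mod_cast (Finset.mem_Icc.mp hn).2
              have hzre : |z.re| ≤ ‖z‖ := Complex.abs_re_le_norm z
              calc -(Real.log n) * z.re ≤ Real.log n * |z.re| := by
                    rcases abs_cases z.re with ⟨h1, _⟩ | ⟨h1, _⟩ <;> nlinarith
                _ ≤ B * ‖z‖ := by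
                    apply mul_le_mul hlognB (le_refl _) (abs_nonneg _) hB0 |>.trans
                    exact mul_le_mul_of_nonneg_left hzre hB0
          _ = Cc * Real.exp (B * ‖z‖) - Real.exp (B * ‖z‖) := by
              rw [← Finset.sum_mul, hCc]; ring
          _ ≤ Cc * Real.exp (B * ‖z‖) := by
              have := Real.exp_pos (B * ‖z‖); linarith
      have hDnorm : ‖D z‖ = Real.exp ((g z).re) := by
        rw [hgexp z, Complex.norm_exp]
      rw [hDnorm] at hnorm
      have : Real.exp ((g z).re) ≤ Real.exp (A + B * ‖z‖) := by
        rw [Real.exp_add, hA, Real.exp_log hCc0]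
        exact hnorm
      exact Real.exp_le_exp.mp this
    obtain ⟨a, b, hab⟩ := entire_linear_of_re_le hgdiff hA0 hB0 hre
    have hDform : ∀ z, D z = Complex.exp a * Complex.exp (b * z) := by
      intro z
      rw [hgexp z, hab z, Complex.exp_add]
    -- the master identity
    have genkey : ∀ (r : ℝ) (σ : ℝ),
        Complex.exp a * Complex.exp ((b + (r : ℂ)) * σ)
          = ∑ n ∈ Finset.Icc 1 K,
              c n * Complex.exp (((r - Real.log n : ℝ) : ℂ) * σ) := by
      intro r σ
      have h1 : Complex.exp a * Complex.exp ((b + (r : ℂ)) * σ)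
          = D σ * Complex.exp ((r : ℂ) * σ) := by
        rw [hDform σ,
          show ((b + (r:ℂ)) * (σ:ℂ)) = b * σ + (r:ℂ) * σ from by ring,
          Complex.exp_add, ← mul_assoc]
      rw [h1, hD' σ, Finset.sum_mul]
      refine Finset.sum_congr rfl fun n hn => ?_
      rw [mul_assoc, ← Complex.exp_add]
      congr 2
      push_cast
      ring
    -- limit at +∞ : b = -log m
    have hbm : b + (Real.log m : ℂ) = 0 := by
      apply exp_limit_zero (Complex.exp_ne_zero a) hcm
      have htend : Tendsto (fun σ : ℝ => ∑ n ∈ Finset.Icc 1 K,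
          c n * Complex.exp (((Real.log m - Real.log n : ℝ) : ℂ) * σ)) atTop
          (nhds (c m)) := by
        have hsum : (c m) = ∑ n ∈ Finset.Icc 1 K,
            (if n = m then c m else 0) := by
          rw [Finset.sum_ite_eq' (Finset.Icc 1 K) m (fun _ => c m)]
          simp [hmIcc]
        rw [hsum]
        apply tendsto_finset_sum
        intro n hn
        by_cases hnm : n = m
        · subst hnm
          simp only [if_pos rfl, sub_self]
          simpa using (tendsto_const_nhds :
            Tendsto (fun _ : ℝ => c n) atTop (nhds (c n)))
        · rw [if_neg hnm]
          by_cases hcn : c n = 0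
          · simpa [hcn] using (tendsto_const_nhds :
              Tendsto (fun _ : ℝ => (0:ℂ)) atTop (nhds 0))
          · have hnS : n ∈ S := Finset.mem_filter.mpr ⟨hn, hcn⟩
            have hmn : m < n := lt_of_le_of_ne (S.min'_le n hnS) (Ne.symm hnm)
            have hd : Real.log m - Real.log n < 0 := by
              have : Real.log m < Real.log n := by
                apply Real.log_lt_log (by exact_mod_cast hm1)
                exact_mod_cast hmn
              linarith
            exact tendsto_cexp_mul_zero hd (c n)
      exact htend.congr fun σ => (genkey (Real.log m) σ).symm
    -- limit at -∞ : b = -log M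
    have hbM : b + (Real.log M : ℂ) = 0 := by
      have hkey := genkey (Real.log M)
      have hneg : -(b + (Real.log M : ℂ)) = 0 := by
        apply exp_limit_zero (Complex.exp_ne_zero a) hcM
        have htend : Tendsto (fun σ : ℝ => ∑ n ∈ Finset.Icc 1 K,
            c n * Complex.exp (((Real.log n - Real.log M : ℝ) : ℂ) * σ)) atTop
            (nhds (c M)) := by
          have hsum : (c M) = ∑ n ∈ Finset.Icc 1 K,
              (if n = M then c M else 0) := by
            rw [Finset.sum_ite_eq' (Finset.Icc 1 K) M (fun _ => c M)]
            simp [hMIcc]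
          rw [hsum]
          apply tendsto_finset_sum
          intro n hn
          by_cases hnm : n = M
          · subst hnm
            simp only [if_pos rfl, sub_self]
            simpa using (tendsto_const_nhds :
              Tendsto (fun _ : ℝ => c n) atTop (nhds (c n)))
          · rw [if_neg hnm]
            by_cases hcn : c n = 0
            · simpa [hcn] using (tendsto_const_nhds :
                Tendsto (fun _ : ℝ => (0:ℂ)) atTop (nhds 0))
            · have hnS : n ∈ S := Finset.mem_filter.mpr ⟨hn, hcn⟩
              have hmn : n < M := lt_of_le_of_ne (S.le_max' n hnS) hnm
              have hd : Real.log n - Real.log M < 0 := by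
                have : Real.log n < Real.log M := by
                  apply Real.log_lt_log
                  · exact_mod_cast (Finset.mem_Icc.mp hn).1.trans_lt' Nat.zero_lt_one
                  · exact_mod_cast hmn
                linarith
              exact tendsto_cexp_mul_zero hd (c n)
        refine htend.congr fun σ => ?_
        have h2 := genkey (Real.log M) (-σ)
        have e1 : ((b + (Real.log M : ℂ))) * ((-σ : ℝ) : ℂ)
            = (-(b + (Real.log M : ℂ))) * (σ : ℂ) := by push_cast; ring
        rw [e1] at h2
        rw [h2]
        refine Finset.sum_congr rfl fun n hn => ?_
        congr 1
        congr 1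
        push_cast
        ring
      exact neg_eq_zero.mp hneg
    have hlogeq : Real.log m = Real.log M := by
      have h : ((Real.log m : ℝ) : ℂ) = ((Real.log M : ℝ) : ℂ) := by
        linear_combination hbm - hbM
      exact_mod_cast h
    have hcast : (m : ℝ) = (M : ℝ) := by
      refine Real.log_injOn_pos (Set.mem_Ioi.mpr ?_) (Set.mem_Ioi.mpr ?_) hlogeq
      · exact_mod_cast hm1
      · exact_mod_cast hM1
    exact_mod_cast hcast
  -- assemble
  have hzero : ∀ n ∈ Finset.Icc 1 K, n ≠ m → c n = 0 := by
    intro n hn hnm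
    by_contra hcn
    have hnS : n ∈ S := Finset.mem_filter.mpr ⟨hn, hcn⟩
    have h1 : m ≤ n := S.min'_le n hnS
    have h2 : n ≤ M := S.le_max' n hnS
    rw [← hmM] at h2
    exact hnm (le_antisymm h2 h1)
  have hmono : ∀ s : ℂ, D s = c m * (m : ℂ) ^ (-s) := by
    intro s
    rw [hD s]
    exact Finset.sum_eq_single_of_mem m hmIcc fun n hn hnm => by
      rw [hzero n hn hnm, zero_mul]
  refine ⟨⟨m, hmIcc, hcm, hzero, hmono⟩, ?_⟩
  intro hc1 s
  have h1S : (1 : ℕ) ∈ S := Finset.mem_filter.mpr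
    ⟨Finset.mem_Icc.mpr ⟨le_refl 1, hK⟩, by rw [hc1]; exact one_ne_zero⟩
  have hm1' : m = 1 := le_antisymm (S.min'_le 1 h1S) hm1
  rw [hmono s, hm1', hc1, Nat.cast_one, one_cpow, mul_one]
end
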